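/- arXiv:1804.06127 — 3 statements merged into one kernel-verified Lean document; each statement's English description precedes it below -/
import Mathlib

section
/- With the token diffusion iteration q(t+1) = P̲ q(t) + D^{-1} b̲, q(0) = 0, and limit q(∞) = (I−P̲)^{-1} D^{-1} b̲, the error satisfies ‖q(t) − q(∞)‖ ≤ (vol_max/vol_min)^{1/2} · ρ̲^t / ((1 − ρ̲) · vol(source)), where ρ̲ < 1 is the spectral radius of P̲. -/
open Matrix

/-- The spectral radius of a real square matrix. -/
noncomputable def specRad {n : ℕ} (M : Matrix (Fin n) (Fin n) ℝ) : ℝ :=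
  sSup {r : ℝ | ∃ μ ∈ spectrum ℂ (M.map (Complex.ofReal)), r = ‖μ‖}

/-- Euclidean norm of a vector in `Fin n → ℝ`. -/
noncomputable def eucNorm {n : ℕ} (v : Fin n → ℝ) : ℝ :=
  Real.sqrt (∑ i, (v i) ^ 2)

lemma unitary_sum_sq {n : ℕ} (U : Matrix (Fin n) (Fin n) ℝ) (hU : Uᵀ * U = 1)
    (w : Fin n → ℝ) : ∑ i, (U *ᵥ w) i ^ 2 = ∑ i, (w i) ^ 2 := by
  have h : (U *ᵥ w) ⬝ᵥ (U *ᵥ w) = w ⬝ᵥ w := by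
    rw [dotProduct_mulVec, ← mulVec_transpose, mulVec_mulVec, hU, one_mulVec]
  simpa [dotProduct, sq] using h

lemma mem_spec_of_det {n : ℕ} (M : Matrix (Fin n) (Fin n) ℝ) (μ : ℝ)
    (h : (μ • (1 : Matrix (Fin n) (Fin n) ℝ) - M).det = 0) :
    (μ : ℂ) ∈ spectrum ℂ (M.map Complex.ofReal) := by
  rw [spectrum.mem_iff]
  intro hu
  rw [Matrix.isUnit_iff_isUnit_det] at hu
  have heq : algebraMap ℂ (Matrix (Fin n) (Fin n) ℂ) (μ : ℂ) - M.map Complex.ofReal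
      = (μ • (1 : Matrix (Fin n) (Fin n) ℝ) - M).map Complex.ofReal := by
    ext i j
    by_cases hij : i = j <;>
      simp [Matrix.algebraMap_matrix_apply, hij, Matrix.one_apply]
  rw [heq] at hu
  have hdet : ((μ • (1 : Matrix (Fin n) (Fin n) ℝ) - M).map Complex.ofReal).det = 0 := by
    have h2 := RingHom.map_det Complex.ofRealHom (μ • (1 : Matrix (Fin n) (Fin n) ℝ) - M)
    rw [h] at h2
    have h3 : ((μ • (1 : Matrix (Fin n) (Fin n) ℝ) - M).map Complex.ofRealHom).det = 0 := by
      simpa using h2.symm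
    exact h3
  rw [hdet] at hu
  simp at hu

set_option maxHeartbeats 1000000 in
/-- For the token diffusion iteration `q(t+1) = P̲ q(t) + D⁻¹ b̲`, `q(0) = 0`, with
limit `q(∞) = (I - P̲)⁻¹ D⁻¹ b̲`, the error satisfies
`‖q(t) - q(∞)‖ ≤ (vol_max/vol_min)^(1/2) · ρ̲^t / ((1 - ρ̲) · vol(source))`. -/
theorem stmt13 {n : ℕ} (A : Matrix (Fin n) (Fin n) ℝ)
    (hsym : A.IsSymm) (hnonneg : ∀ u v, 0 ≤ A u v)
    (d : Fin n → ℝ) (hd : ∀ u, d u = ∑ v, A u v) (hpos : ∀ u, 0 < d u)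
    (source sink : Fin n) (hss : source ≠ sink)
    (P Punder : Matrix (Fin n) (Fin n) ℝ)
    (hP : P = (Matrix.diagonal fun u => (d u)⁻¹) * A)
    (hPunder : ∀ i j, Punder i j = if i = sink ∨ j = sink then 0 else P i j)
    (hρ0 : 0 < specRad Punder) (hρ : specRad Punder < 1)
    (volmin volmax : ℝ)
    (hmin : (∀ u, volmin ≤ d u) ∧ ∃ u, d u = volmin)
    (hmax : (∀ u, d u ≤ volmax) ∧ ∃ u, d u = volmax)
    (bu : Fin n → ℝ) (hbu : bu = Pi.single source 1)
    (q : ℕ → Fin n → ℝ) (hq0 : q 0 = 0)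
    (hqrec : ∀ t, q (t + 1) =
      Punder.mulVec (q t) + (Matrix.diagonal fun u => (d u)⁻¹).mulVec bu)
    (qinf : Fin n → ℝ)
    (hqinf : qinf = (1 - Punder)⁻¹.mulVec ((Matrix.diagonal fun u => (d u)⁻¹).mulVec bu)) :
    ∀ t : ℕ, eucNorm (q t - qinf) ≤
      Real.sqrt (volmax / volmin) * (specRad Punder) ^ t /
        ((1 - specRad Punder) * d source) := by
  intro t
  set ρ := specRad Punder with hρdef
  -- basic positivity
  have hvolmin0 : 0 < volmin := by obtain ⟨u, hu⟩ := hmin.2; exact hu ▸ hpos u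
  have hvolmax0 : 0 < volmax := by obtain ⟨u, hu⟩ := hmax.2; exact hu ▸ hpos u
  have h1ρ : 0 < 1 - ρ := by linarith
  clear_value ρ
  -- square root scaling
  set s : Fin n → ℝ := fun i => Real.sqrt (d i) with hsdef
  have hs : ∀ i, 0 < s i := fun i => Real.sqrt_pos.mpr (hpos i)
  have hss' : ∀ i, s i * s i = d i := fun i => Real.mul_self_sqrt (hpos i).le
  clear_value s
  set S : Matrix (Fin n) (Fin n) ℝ := Matrix.diagonal s with hSdef
  set Si : Matrix (Fin n) (Fin n) ℝ := Matrix.diagonal (fun i => (s i)⁻¹) with hSidef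
  have hSiS : Si * S = 1 := by
    rw [hSidef, hSdef, diagonal_mul_diagonal]
    rw [show (fun i => (s i)⁻¹ * s i) = fun _ : Fin n => (1 : ℝ) from
      funext fun i => inv_mul_cancel₀ (hs i).ne']
    exact diagonal_one
  have hSSi : S * Si = 1 := by
    rw [hSdef, hSidef, diagonal_mul_diagonal]
    rw [show (fun i => s i * (s i)⁻¹) = fun _ : Fin n => (1 : ℝ) from
      funext fun i => mul_inv_cancel₀ (hs i).ne']
    exact diagonal_one
  clear_value S Si
  set N : Matrix (Fin n) (Fin n) ℝ := S * Punder * Si with hNdef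
  have hNapp : ∀ i j, N i j = s i * Punder i j * (s j)⁻¹ := by
    intro i j
    rw [hNdef, hSidef, mul_diagonal, hSdef, diagonal_mul]
  have hPapp : ∀ i j, P i j = (d i)⁻¹ * A i j := by
    intro i j; rw [hP, diagonal_mul]
  have hH : N.IsHermitian := by
    rw [Matrix.IsHermitian, conjTranspose_eq_transpose_of_trivial]
    ext i j
    rw [transpose_apply, hNapp, hNapp, hPunder, hPunder]
    by_cases h1 : i = sink
    · simp [h1]
    · by_cases h2 : j = sink
      · simp [h2]
      · simp only [h1, h2, or_self, if_false, if_neg (by tauto : ¬(j = sink ∨ i = sink)),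
          if_neg (by tauto : ¬(i = sink ∨ j = sink))]
        rw [hPapp, hPapp, hsym.apply i j, ← hss' i, ← hss' j]
        have hsi := (hs i).ne'
        have hsj := (hs j).ne'
        field_simp
  have hPN : Punder = Si * N * S := by
    rw [hNdef]
    calc Punder = 1 * Punder * 1 := by rw [one_mul, mul_one]
      _ = (Si * S) * Punder * (Si * S) := by rw [hSiS]
      _ = Si * (S * Punder * Si) * S := by simp only [Matrix.mul_assoc]
  clear_value N
  -- spectral data
  set U : Matrix (Fin n) (Fin n) ℝ := (hH.eigenvectorUnitary : Matrix (Fin n) (Fin n) ℝ)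
    with hUdef
  set lam : Fin n → ℝ := hH.eigenvalues with hlamdef
  have hU2 : U * star U = 1 := Matrix.mem_unitaryGroup_iff.mp (hH.eigenvectorUnitary).2
  have hU1 : star U * U = 1 := Matrix.mem_unitaryGroup_iff'.mp (hH.eigenvectorUnitary).2
  have hstarU : star U = Uᵀ := by
    rw [Matrix.star_eq_conjTranspose, conjTranspose_eq_transpose_of_trivial]
  have hspec : N = U * Matrix.diagonal lam * star U := by
    have := hH.spectral_theorem
    simpa [Function.comp] using this
  clear_value U lam
  have hconj : ∀ D1 D2 : Matrix (Fin n) (Fin n) ℝ,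
      (U * D1 * star U) * (U * D2 * star U) = U * (D1 * D2) * star U := by
    intro D1 D2
    simp only [← Matrix.mul_assoc]
    rw [Matrix.mul_assoc (U * D1) (star U) U, hU1, mul_one]
  have hsmul1 : ∀ μ : ℝ, U * Matrix.diagonal (fun _ => μ) * star U
      = μ • (1 : Matrix (Fin n) (Fin n) ℝ) := by
    intro μ
    have h1 : Matrix.diagonal (fun _ : Fin n => μ) = μ • (1 : Matrix (Fin n) (Fin n) ℝ) := by
      ext i j
      by_cases h : i = j <;>
        simp [Matrix.diagonal_apply, h, Matrix.one_apply]
    rw [h1, Matrix.mul_smul, Matrix.smul_mul, mul_one, hU2]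
  have hsubconj : ∀ (g : Fin n → ℝ) (μ : ℝ),
      μ • (1 : Matrix (Fin n) (Fin n) ℝ) - U * Matrix.diagonal g * star U
        = U * Matrix.diagonal (fun i => μ - g i) * star U := by
    intro g μ
    rw [← hsmul1 μ, ← Matrix.sub_mul, ← Matrix.mul_sub, ← diagonal_sub]
  have hdetconj : ∀ g : Fin n → ℝ, (U * Matrix.diagonal g * star U).det = ∏ i, g i := by
    intro g
    rw [det_mul, det_mul]
    have h1 : U.det * (star U).det = 1 := by rw [← det_mul, hU2, det_one]
    calc U.det * (Matrix.diagonal g).det * (star U).det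
        = (U.det * (star U).det) * (Matrix.diagonal g).det := by ring
      _ = (Matrix.diagonal g).det := by rw [h1, one_mul]
      _ = ∏ i, g i := det_diagonal
  have hsim : ∀ μ : ℝ, (μ • (1 : Matrix (Fin n) (Fin n) ℝ) - Punder).det
      = (μ • (1 : Matrix (Fin n) (Fin n) ℝ) - N).det := by
    intro μ
    have h1 : μ • (1 : Matrix (Fin n) (Fin n) ℝ) - Punder
        = Si * (μ • (1 : Matrix (Fin n) (Fin n) ℝ) - N) * S := by
      rw [Matrix.mul_sub, Matrix.sub_mul, hPN]
      congr 1
      rw [Matrix.mul_smul, mul_one, Matrix.smul_mul, hSiS]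
    rw [h1, det_mul, det_mul]
    have h2 : Si.det * S.det = 1 := by rw [← det_mul, hSiS, det_one]
    calc Si.det * (μ • (1 : Matrix (Fin n) (Fin n) ℝ) - N).det * S.det
        = (Si.det * S.det) * (μ • (1 : Matrix (Fin n) (Fin n) ℝ) - N).det := by ring
      _ = _ := by rw [h2, one_mul]
  -- eigenvalue bounds
  have hbdd : BddAbove {r : ℝ | ∃ μ ∈ spectrum ℂ (Punder.map Complex.ofReal),
      r = ‖μ‖} := by
    have h1 : {r : ℝ | ∃ μ ∈ spectrum ℂ (Punder.map Complex.ofReal), r = ‖μ‖}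
        = (fun μ : ℂ => ‖μ‖) '' (spectrum ℂ (Punder.map Complex.ofReal)) := by
      ext r
      simp [Set.mem_image, eq_comm]
    rw [h1]
    exact ((Matrix.finite_spectrum _).image _).bddAbove
  have hlam_le : ∀ i, |lam i| ≤ ρ := by
    intro i
    have hdet0 : (lam i • (1 : Matrix (Fin n) (Fin n) ℝ) - Punder).det = 0 := by
      rw [hsim, hspec, hsubconj, hdetconj]
      exact Finset.prod_eq_zero (Finset.mem_univ i) (sub_self _)
    have hmem : |lam i| ∈ {r : ℝ | ∃ μ ∈ spectrum ℂ (Punder.map Complex.ofReal),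
        r = ‖μ‖} :=
      ⟨(lam i : ℂ), mem_spec_of_det Punder (lam i) hdet0, (by simp)⟩
    have hspecr : specRad Punder = sSup {r : ℝ | ∃ μ ∈ spectrum ℂ (Punder.map Complex.ofReal),
        r = ‖μ‖} := rfl
    rw [hρdef, hspecr]
    exact le_csSup hbdd hmem
  have hlam_lt1 : ∀ i, 1 - ρ ≤ 1 - lam i := by
    intro i
    have := (abs_le.mp (hlam_le i)).2
    linarith
  -- invertibility of 1 - Punder
  have h1P : ((1 : Matrix (Fin n) (Fin n) ℝ) - Punder).det ≠ 0 := by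
    have h1 : (1 : Matrix (Fin n) (Fin n) ℝ) - Punder
        = (1 : ℝ) • (1 : Matrix (Fin n) (Fin n) ℝ) - Punder := by rw [one_smul]
    rw [h1, hsim, hspec, hsubconj, hdetconj]
    refine Finset.prod_ne_zero_iff.mpr fun i _ => ?_
    have h2 := hlam_lt1 i
    have h3 : 0 < 1 - lam i := by linarith
    exact h3.ne'
  set f : Fin n → ℝ := (Matrix.diagonal fun u => (d u)⁻¹) *ᵥ bu with hfdef
  clear_value f
  have hqinf_eq : ((1 : Matrix (Fin n) (Fin n) ℝ) - Punder) *ᵥ qinf = f := by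
    rw [hqinf, mulVec_mulVec, Matrix.mul_nonsing_inv _ (isUnit_iff_ne_zero.mpr h1P),
      one_mulVec]
  -- error formula
  have herr : ∀ t, q t - qinf = -((Punder ^ t) *ᵥ qinf) := by
    intro t
    induction t with
    | zero => rw [hq0, pow_zero, one_mulVec, zero_sub]
    | succ t ih =>
      have hf : f = qinf - Punder *ᵥ qinf := by
        rw [← hqinf_eq, sub_mulVec, one_mulVec]
      rw [hqrec t, hf]
      have : Punder *ᵥ q t + (qinf - Punder *ᵥ qinf) - qinf = Punder *ᵥ (q t - qinf) := by
        rw [Matrix.mulVec_sub]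
        abel
      rw [this, ih, mulVec_neg, mulVec_mulVec, ← pow_succ']
  -- power formulas
  have hNpow : ∀ t, N ^ t = U * Matrix.diagonal (fun i => lam i ^ t) * star U := by
    intro t
    induction t with
    | zero =>
      simp only [pow_zero]
      rw [diagonal_one, mul_one, hU2]
    | succ t ih =>
      rw [pow_succ, ih, hspec, hconj, diagonal_mul_diagonal,
        show (fun i => lam i ^ t * lam i) = fun i => lam i ^ (t + 1) from
          funext fun i => (pow_succ _ _).symm]
  have hPpow : ∀ t, Punder ^ t = Si * N ^ t * S := by
    intro t
    induction t with
    | zero => rw [pow_zero, pow_zero, mul_one, hSiS]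
    | succ t ih =>
      rw [pow_succ, ih, hPN, pow_succ]
      simp only [← Matrix.mul_assoc]
      rw [Matrix.mul_assoc (Si * N ^ t) S Si, hSSi, mul_one]
  -- vectors
  set y : Fin n → ℝ := S *ᵥ qinf with hydef
  set c : Fin n → ℝ := star U *ᵥ y with hcdef
  set e : Fin n → ℝ := S *ᵥ f with hedef
  set eps : Fin n → ℝ := star U *ᵥ e with hepsdef
  clear_value y c e eps
  have hNy : ((1 : Matrix (Fin n) (Fin n) ℝ) - N) *ᵥ y = e := by
    have hNS : N * S = S * Punder := by
      rw [hNdef, Matrix.mul_assoc, hSiS, mul_one]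
    have h1 : ((1 : Matrix (Fin n) (Fin n) ℝ) - N) * S
        = S * ((1 : Matrix (Fin n) (Fin n) ℝ) - Punder) := by
      rw [Matrix.sub_mul, Matrix.mul_sub, one_mul, mul_one, hNS]
    rw [hydef, mulVec_mulVec, h1, ← mulVec_mulVec, hqinf_eq, hedef]
  have hcoef : ∀ i, (1 - lam i) * c i = eps i := by
    have h1 : ((1 : Matrix (Fin n) (Fin n) ℝ) - N)
        = U * Matrix.diagonal (fun i => 1 - lam i) * star U := by
      rw [show (1 : Matrix (Fin n) (Fin n) ℝ) - N
        = (1:ℝ) • (1 : Matrix (Fin n) (Fin n) ℝ) - N from by rw [one_smul], hspec, hsubconj]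
    have h2 : star U * ((1 : Matrix (Fin n) (Fin n) ℝ) - N)
        = Matrix.diagonal (fun i => 1 - lam i) * star U := by
      rw [h1]
      simp only [← Matrix.mul_assoc]
      rw [hU1, one_mul]
    intro i
    have h3 : (star U * ((1 : Matrix (Fin n) (Fin n) ℝ) - N)) *ᵥ y = eps := by
      rw [← mulVec_mulVec, hNy, hepsdef]
    rw [h2, ← mulVec_mulVec] at h3
    have := congr_fun h3 i
    rw [hcdef]
    rwa [mulVec_diagonal] at this
  -- the explicit formula for the error
  have hform : q t - qinf
      = -(Si *ᵥ (U *ᵥ (Matrix.diagonal (fun i => lam i ^ t) *ᵥ c))) := by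
    rw [herr t, hPpow t, hNpow t, hcdef, hydef]
    congr 1
    rw [mulVec_mulVec, mulVec_mulVec, mulVec_mulVec, mulVec_mulVec]
    simp only [Matrix.mul_assoc]
  -- sums of squares
  have hUtU : Uᵀ * U = 1 := by rw [← hstarU]; exact hU1
  have hUUt : (Uᵀ)ᵀ * Uᵀ = 1 := by rw [transpose_transpose, ← hstarU]; exact hU2
  set w : Fin n → ℝ := Matrix.diagonal (fun i => lam i ^ t) *ᵥ c with hwdef
  clear_value w
  have hsum1 : ∑ i, ((q t - qinf) i) ^ 2 = ∑ i, ((s i)⁻¹ * (U *ᵥ w) i) ^ 2 := by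
    rw [hform]
    refine Finset.sum_congr rfl fun i _ => ?_
    rw [Pi.neg_apply, neg_sq, hSidef, mulVec_diagonal]
  have hsum2 : ∑ i, ((U *ᵥ w) i) ^ 2 = ∑ i, (w i) ^ 2 := unitary_sum_sq U hUtU w
  have hepse : ∑ i, (eps i) ^ 2 = ∑ i, (e i) ^ 2 := by
    rw [hepsdef, hstarU]
    exact unitary_sum_sq Uᵀ hUUt e
  have hesum : ∑ i, (e i) ^ 2 = (d source)⁻¹ := by
    have he : ∀ i, e i = if i = source then s source * (d source)⁻¹ else 0 := by
      intro i
      rw [hedef, hSdef, mulVec_diagonal, hfdef, mulVec_diagonal, hbu, Pi.single_apply]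
      by_cases h : i = source <;> simp [h]
    have h1 : ∑ i, (e i) ^ 2
        = ∑ i, (if i = source then (s source * (d source)⁻¹) ^ 2 else 0) := by
      refine Finset.sum_congr rfl fun i _ => ?_
      rw [he i]
      by_cases h : i = source <;> simp [h]
    rw [h1, Finset.sum_ite_eq' Finset.univ source fun _ => (s source * (d source)⁻¹) ^ 2]
    simp only [Finset.mem_univ, if_true]
    rw [← hss' source]
    have := (hs source).ne'
    field_simp
  -- term bound
  have hterm : ∀ i, (1 - ρ) ^ 2 * (w i) ^ 2 ≤ (ρ ^ t) ^ 2 * (eps i) ^ 2 := by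
    intro i
    have hwi : w i = lam i ^ t * c i := by rw [hwdef, mulVec_diagonal]
    have hsq : lam i ^ 2 ≤ ρ ^ 2 := by
      have h := abs_le.mp (hlam_le i)
      nlinarith [h.1, h.2]
    have hpowt : (lam i ^ t) ^ 2 ≤ (ρ ^ t) ^ 2 := by
      calc (lam i ^ t) ^ 2 = (lam i ^ 2) ^ t := by rw [← pow_mul, ← pow_mul, mul_comm]
        _ ≤ (ρ ^ 2) ^ t := pow_le_pow_left₀ (sq_nonneg _) hsq t
        _ = (ρ ^ t) ^ 2 := by rw [← pow_mul, ← pow_mul, mul_comm]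
    have h1ml2 : (1 - ρ) ^ 2 ≤ (1 - lam i) ^ 2 :=
      pow_le_pow_left₀ h1ρ.le (hlam_lt1 i) 2
    have hmm : (1 - ρ) ^ 2 * (lam i ^ t) ^ 2 ≤ (1 - lam i) ^ 2 * (ρ ^ t) ^ 2 :=
      mul_le_mul h1ml2 hpowt (sq_nonneg _) (sq_nonneg _)
    calc (1 - ρ) ^ 2 * (w i) ^ 2 = ((1 - ρ) ^ 2 * (lam i ^ t) ^ 2) * (c i) ^ 2 := by
          rw [hwi]; ring
      _ ≤ ((1 - lam i) ^ 2 * (ρ ^ t) ^ 2) * (c i) ^ 2 :=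
          mul_le_mul_of_nonneg_right hmm (sq_nonneg _)
      _ = (ρ ^ t) ^ 2 * ((1 - lam i) * c i) ^ 2 := by ring
      _ = (ρ ^ t) ^ 2 * (eps i) ^ 2 := by rw [hcoef i]
  have hsum3 : (1 - ρ) ^ 2 * ∑ i, (w i) ^ 2 ≤ (ρ ^ t) ^ 2 * (d source)⁻¹ := by
    rw [← hesum, ← hepse, Finset.mul_sum, Finset.mul_sum]
    exact Finset.sum_le_sum fun i _ => hterm i
  have hsum4 : ∑ i, ((s i)⁻¹ * (U *ᵥ w) i) ^ 2 ≤ volmin⁻¹ * ∑ i, ((U *ᵥ w) i) ^ 2 := by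
    rw [Finset.mul_sum]
    refine Finset.sum_le_sum fun i _ => ?_
    have h1 : ((s i)⁻¹) ^ 2 = (d i)⁻¹ := by
      rw [← hss' i, sq, mul_inv]
    have h2 : (d i)⁻¹ ≤ volmin⁻¹ := by
      apply inv_anti₀ hvolmin0 (hmin.1 i)
    calc ((s i)⁻¹ * (U *ᵥ w) i) ^ 2 = ((s i)⁻¹) ^ 2 * ((U *ᵥ w) i) ^ 2 := by ring
      _ = (d i)⁻¹ * ((U *ᵥ w) i) ^ 2 := by rw [h1]
      _ ≤ volmin⁻¹ * ((U *ᵥ w) i) ^ 2 := mul_le_mul_of_nonneg_right h2 (sq_nonneg _)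
  -- assemble
  have hT : ∑ i, ((q t - qinf) i) ^ 2
      ≤ volmin⁻¹ * ((ρ ^ t) ^ 2 * (d source)⁻¹ / (1 - ρ) ^ 2) := by
    rw [hsum1]
    refine hsum4.trans ?_
    rw [hsum2]
    have h1 : ∑ i, (w i) ^ 2 ≤ (ρ ^ t) ^ 2 * (d source)⁻¹ / (1 - ρ) ^ 2 := by
      rw [le_div_iff₀ (by positivity)]
      linarith [hsum3]
    exact mul_le_mul_of_nonneg_left h1 (by positivity)
  have hR0 : 0 ≤ Real.sqrt (volmax / volmin) * ρ ^ t / ((1 - ρ) * d source) := by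
    have := hpos source
    positivity
  have hR2 : (Real.sqrt (volmax / volmin) * ρ ^ t / ((1 - ρ) * d source)) ^ 2
      = (volmax / volmin) * (ρ ^ t) ^ 2 / ((1 - ρ) ^ 2 * (d source) ^ 2) := by
    rw [div_pow, mul_pow, mul_pow, Real.sq_sqrt (by positivity)]
  have hcmp : volmin⁻¹ * ((ρ ^ t) ^ 2 * (d source)⁻¹ / (1 - ρ) ^ 2)
      ≤ (volmax / volmin) * (ρ ^ t) ^ 2 / ((1 - ρ) ^ 2 * (d source) ^ 2) := by
    have hds : 0 < d source := hpos source
    have hdv : d source ≤ volmax := hmax.1 source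
    have hL' : volmin⁻¹ * ((ρ ^ t) ^ 2 * (d source)⁻¹ / (1 - ρ) ^ 2)
        = ((ρ ^ t) ^ 2 * d source) / (volmin * (1 - ρ) ^ 2 * d source ^ 2) := by
      field_simp
    have hR' : volmax / volmin * (ρ ^ t) ^ 2 / ((1 - ρ) ^ 2 * d source ^ 2)
        = (volmax * (ρ ^ t) ^ 2) / (volmin * (1 - ρ) ^ 2 * d source ^ 2) := by
      field_simp
    rw [hL', hR', div_eq_mul_inv, div_eq_mul_inv]
    exact mul_le_mul_of_nonneg_right (by nlinarith [sq_nonneg (ρ ^ t)]) (by positivity)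
  rw [eucNorm]
  calc Real.sqrt (∑ i, ((q t - qinf) i) ^ 2)
      ≤ Real.sqrt ((Real.sqrt (volmax / volmin) * ρ ^ t / ((1 - ρ) * d source)) ^ 2) :=
        Real.sqrt_le_sqrt (by rw [hR2]; exact hT.trans hcmp)
    _ = _ := Real.sqrt_sq hR0
end

section
/- Let λ̲ = 1 − ρ̲ where ρ̲ is the spectral radius of the sink-grounded transition matrix of a connected weighted graph on n nodes. Then λ̲ ≥ (λ̄₂ / (2·vol_max·(n−1))) · Σ_{i≠sink} w_{i,sink}/(w_{i,sink} + λ̄₂), where λ̄₂ is the second smallest eigenvalue of the Laplacian of the graph with the sink removed, vol_max is the maximum node volume, and w_{i,sink} is the weight of the edge from i to the sink (0 if absent). -/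
open Matrix

/-- Second smallest Laplacian eigenvalue (Fiedler value) via the variational
characterization over vectors orthogonal to the all-ones vector. -/
noncomputable def fiedler {ι : Type*} [Fintype ι] (L : Matrix ι ι ℝ) : ℝ :=
  sInf {r : ℝ | ∃ x : ι → ℝ, x ≠ 0 ∧ (∑ i, x i) = 0 ∧
    r = (x ⬝ᵥ L.mulVec x) / (∑ i, (x i) ^ 2)}

section Aux
variable {ι : Type*} [Fintype ι] [DecidableEq ι] (B : Matrix ι ι ℝ)
  (hsymB : ∀ i j, B i j = B j i) (hnn : ∀ i j, 0 ≤ B i j)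
  (L : Matrix ι ι ℝ)
  (hL : ∀ i j, L i j = (if i = j then ∑ k, B i k else 0) - B i j)

lemma quadmin (b w s u : ℝ) (hb : 0 ≤ b) (hw : 0 ≤ w) :
    b * (w / (w + b)) * s ^ 2 ≤ b * u ^ 2 + w * (u + s) ^ 2 := by
  rcases eq_or_lt_of_le (add_nonneg hw hb) with h | h
  · rw [← h, div_zero]
    nlinarith [sq_nonneg u, sq_nonneg (u+s)]
  · have : b * (w / (w + b)) * s ^ 2 = b * w * s ^ 2 / (w + b) := by
      field_simp
    rw [this, div_le_iff₀ h]
    nlinarith [sq_nonneg (b * u + w * (u + s))]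

include hL in
lemma quadform (x : ι → ℝ) :
    x ⬝ᵥ L.mulVec x = (∑ i, (∑ k, B i k) * x i ^ 2) - ∑ i, ∑ j, B i j * x i * x j := by
  simp only [dotProduct, mulVec, dotProduct]
  rw [← Finset.sum_sub_distrib]
  refine Finset.sum_congr rfl fun i _ => ?_
  simp only [hL]
  rw [Finset.sum_congr rfl (fun j _ => sub_mul _ _ _), Finset.sum_sub_distrib, mul_sub]
  congr 1
  · simp only [ite_mul, zero_mul, Finset.sum_ite_eq, Finset.mem_univ, if_true]
    ring
  · rw [Finset.mul_sum]
    exact Finset.sum_congr rfl fun j _ => by ring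

include hsymB hnn hL in
lemma quadform_psd (x : ι → ℝ) : 0 ≤ x ⬝ᵥ L.mulVec x := by
  have h2 : 2 * (x ⬝ᵥ L.mulVec x) = ∑ i, ∑ j, B i j * (x i - x j) ^ 2 := by
    rw [quadform B L hL x]
    have e1 : ∑ i, (∑ k, B i k) * x i ^ 2 = ∑ i, ∑ k, B i k * x i ^ 2 := by
      refine Finset.sum_congr rfl fun i _ => Finset.sum_mul _ _ _
    have e2 : ∑ i, (∑ k, B i k) * x i ^ 2 = ∑ i, ∑ k, B i k * x k ^ 2 := by
      rw [e1, Finset.sum_comm]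
      refine Finset.sum_congr rfl fun j _ => Finset.sum_congr rfl fun i _ => by
        rw [hsymB]
    rw [mul_sub]
    calc 2 * ∑ i, (∑ k, B i k) * x i ^ 2 - 2 * ∑ i, ∑ j, B i j * x i * x j
        = (∑ i, ∑ k, B i k * x i ^ 2) + (∑ i, ∑ k, B i k * x k ^ 2)
          - 2 * ∑ i, ∑ j, B i j * x i * x j := by rw [← e1, ← e2]; ring
      _ = ∑ i, ∑ j, B i j * (x i - x j) ^ 2 := by
          rw [Finset.mul_sum, ← Finset.sum_add_distrib, ← Finset.sum_sub_distrib]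
          refine Finset.sum_congr rfl fun i _ => ?_
          rw [Finset.mul_sum, ← Finset.sum_add_distrib, ← Finset.sum_sub_distrib]
          refine Finset.sum_congr rfl fun j _ => by ring
  have hnn2 : 0 ≤ ∑ i, ∑ j, B i j * (x i - x j) ^ 2 :=
    Finset.sum_nonneg fun i _ => Finset.sum_nonneg fun j _ =>
      mul_nonneg (hnn i j) (sq_nonneg _)
  linarith [h2]

include hsymB hnn hL in
lemma fiedler_nonneg : 0 ≤ fiedler L := by
  apply Real.sInf_nonneg
  rintro r ⟨x, hx, -, rfl⟩
  exact div_nonneg (quadform_psd B hsymB hnn L hL x) (Finset.sum_nonneg fun i _ => sq_nonneg _)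

include hsymB hnn hL in
lemma fiedler_le (u : ι → ℝ) (hu : (∑ i, u i) = 0) :
    fiedler L * ∑ i, u i ^ 2 ≤ u ⬝ᵥ L.mulVec u := by
  rcases eq_or_ne u 0 with rfl | hne
  · simp [mulVec]
  · have hden : 0 < ∑ i, u i ^ 2 := by
      obtain ⟨k, hk⟩ := Function.ne_iff.mp hne
      exact Finset.sum_pos' (fun i _ => sq_nonneg _) ⟨k, Finset.mem_univ k, by simpa using sq_pos_of_ne_zero hk⟩
    have hmem : (u ⬝ᵥ L.mulVec u) / (∑ i, u i ^ 2) ∈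
        {r : ℝ | ∃ x : ι → ℝ, x ≠ 0 ∧ (∑ i, x i) = 0 ∧
          r = (x ⬝ᵥ L.mulVec x) / (∑ i, (x i) ^ 2)} := ⟨u, hne, hu, rfl⟩
    have hbdd : BddBelow {r : ℝ | ∃ x : ι → ℝ, x ≠ 0 ∧ (∑ i, x i) = 0 ∧
        r = (x ⬝ᵥ L.mulVec x) / (∑ i, (x i) ^ 2)} := by
      refine ⟨0, ?_⟩
      rintro r ⟨x, hx, -, rfl⟩
      exact div_nonneg (quadform_psd B hsymB hnn L hL x)
        (Finset.sum_nonneg fun i _ => sq_nonneg _)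
    have := csInf_le hbdd hmem
    calc fiedler L * ∑ i, u i ^ 2 ≤ (u ⬝ᵥ L.mulVec u) / (∑ i, u i ^ 2) * ∑ i, u i ^ 2 :=
          mul_le_mul_of_nonneg_right this hden.le
      _ = u ⬝ᵥ L.mulVec u := div_mul_cancel₀ _ hden.ne'


include hsymB in
lemma quad_shift (s : ℝ) (u : ι → ℝ) :
    (∑ i, (∑ k, B i k) * (u i + s) ^ 2) - ∑ i, ∑ j, B i j * (u i + s) * (u j + s)
      = (∑ i, (∑ k, B i k) * u i ^ 2) - ∑ i, ∑ j, B i j * u i * u j := by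
  have hc : ∑ i, ∑ j, B i j * u j = ∑ i, (∑ k, B i k) * u i := by
    rw [Finset.sum_comm]
    refine Finset.sum_congr rfl fun j _ => ?_
    rw [← Finset.sum_mul]
    congr 1
    exact Finset.sum_congr rfl fun i _ => hsymB i j
  have h1 : ∑ i, (∑ k, B i k) * (u i + s) ^ 2
      = (∑ i, (∑ k, B i k) * u i ^ 2) + 2 * s * (∑ i, (∑ k, B i k) * u i)
        + s ^ 2 * ∑ i, (∑ k, B i k) := by
    rw [Finset.mul_sum, Finset.mul_sum, ← Finset.sum_add_distrib, ← Finset.sum_add_distrib]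
    exact Finset.sum_congr rfl fun i _ => by ring
  have inner : ∀ i, ∑ j, B i j * (u i + s) * (u j + s)
      = (∑ j, B i j * u i * u j) + s * ((∑ k, B i k) * u i) + s * (∑ j, B i j * u j)
        + s ^ 2 * ∑ k, B i k := by
    intro i
    calc ∑ j, B i j * (u i + s) * (u j + s)
        = ∑ j, (B i j * u i * u j + s * (B i j * u i) + s * (B i j * u j) + s ^ 2 * B i j) :=
          Finset.sum_congr rfl fun j _ => by ring
      _ = _ := by
          rw [Finset.sum_add_distrib, Finset.sum_add_distrib, Finset.sum_add_distrib,
            ← Finset.mul_sum, ← Finset.mul_sum, ← Finset.mul_sum, ← Finset.sum_mul]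
  have h2 : ∑ i, ∑ j, B i j * (u i + s) * (u j + s)
      = (∑ i, ∑ j, B i j * u i * u j) + 2 * s * (∑ i, (∑ k, B i k) * u i)
        + s ^ 2 * ∑ i, (∑ k, B i k) := by
    calc ∑ i, ∑ j, B i j * (u i + s) * (u j + s)
        = ∑ i, ((∑ j, B i j * u i * u j) + s * ((∑ k, B i k) * u i) + s * (∑ j, B i j * u j)
            + s ^ 2 * ∑ k, B i k) := Finset.sum_congr rfl fun i _ => inner i
      _ = (∑ i, ∑ j, B i j * u i * u j) + s * (∑ i, (∑ k, B i k) * u i)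
            + s * (∑ i, ∑ j, B i j * u j) + s ^ 2 * ∑ i, (∑ k, B i k) := by
          rw [Finset.sum_add_distrib, Finset.sum_add_distrib, Finset.sum_add_distrib,
            ← Finset.mul_sum, ← Finset.mul_sum, ← Finset.mul_sum]
      _ = _ := by rw [hc]; ring
  rw [h1, h2]; ring

include hsymB hnn hL in
lemma core_ineq (w : ι → ℝ) (hw : ∀ i, 0 ≤ w i) [Nonempty ι] (x : ι → ℝ) :
    fiedler L * (∑ i, w i / (w i + fiedler L)) / (2 * (Fintype.card ι : ℝ)) * ∑ i, x i ^ 2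
      ≤ x ⬝ᵥ L.mulVec x + ∑ i, w i * x i ^ 2 := by
  set β := fiedler L with hβ
  have hβ0 : 0 ≤ β := fiedler_nonneg B hsymB hnn L hL
  set Sf := ∑ i, w i / (w i + β) with hSf
  set M : ℝ := (Fintype.card ι : ℝ) with hM
  have hM0 : 0 < M := by
    rw [hM]
    exact_mod_cast Fintype.card_pos
  set s : ℝ := (∑ i, x i) / M with hs
  set u : ι → ℝ := fun i => x i - s with hu
  have hxu : ∀ i, x i = u i + s := fun i => by simp [hu]
  have husum : ∑ i, u i = 0 := by
    simp only [hu, Finset.sum_sub_distrib, Finset.sum_const, Finset.card_univ, nsmul_eq_mul, hs]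
    field_simp
    rw [hM]; ring
  have hQL : x ⬝ᵥ L.mulVec x = u ⬝ᵥ L.mulVec u := by
    rw [quadform B L hL x, quadform B L hL u]
    calc (∑ i, (∑ k, B i k) * x i ^ 2) - ∑ i, ∑ j, B i j * x i * x j
        = (∑ i, (∑ k, B i k) * (u i + s) ^ 2) - ∑ i, ∑ j, B i j * (u i + s) * (u j + s) := by
          simp_rw [← hxu]
      _ = _ := quad_shift B hsymB s u
  have hfl : β * ∑ i, u i ^ 2 ≤ u ⬝ᵥ L.mulVec u := fiedler_le B hsymB hnn L hL u husum
  have hwx : 0 ≤ ∑ i, w i * x i ^ 2 :=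
    Finset.sum_nonneg fun i _ => mul_nonneg (hw i) (sq_nonneg _)
  set Q : ℝ := x ⬝ᵥ L.mulVec x + ∑ i, w i * x i ^ 2 with hQdef
  have hQ1 : β * ∑ i, u i ^ 2 ≤ Q := by
    rw [hQdef, hQL]; linarith
  have hQ2 : β * Sf * s ^ 2 ≤ Q := by
    have hper : ∀ i, β * (w i / (w i + β)) * s ^ 2 ≤ β * u i ^ 2 + w i * x i ^ 2 := by
      intro i
      rw [hxu i]
      exact quadmin β (w i) s (u i) hβ0 (hw i)
    calc β * Sf * s ^ 2 = ∑ i, β * (w i / (w i + β)) * s ^ 2 := by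
          rw [hSf, Finset.mul_sum, Finset.sum_mul]
      _ ≤ ∑ i, (β * u i ^ 2 + w i * x i ^ 2) := Finset.sum_le_sum fun i _ => hper i
      _ = β * ∑ i, u i ^ 2 + ∑ i, w i * x i ^ 2 := by
          rw [Finset.sum_add_distrib, Finset.mul_sum]
      _ ≤ Q := by rw [hQdef, hQL]; linarith
  have hSfM : Sf ≤ M := by
    have hone : ∀ i : ι, w i / (w i + β) ≤ 1 := by
      intro i
      rcases eq_or_lt_of_le (add_nonneg (hw i) hβ0) with h | h
      · have hw0 : w i = 0 := by
          have := hw i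
          linarith [hβ0, h.symm ▸ (le_refl (0:ℝ))]
        simp [hw0]
      · rw [div_le_one h]; linarith [hβ0]
    calc Sf ≤ ∑ _i : ι, (1 : ℝ) := Finset.sum_le_sum fun i _ => hone i
      _ = M := by simp [hM]
  have hSf0 : 0 ≤ Sf :=
    Finset.sum_nonneg fun i _ => div_nonneg (hw i) (add_nonneg (hw i) hβ0)
  have hx2 : ∑ i, x i ^ 2 = (∑ i, u i ^ 2) + M * s ^ 2 := by
    have step : ∑ i, x i ^ 2 = (∑ i, u i ^ 2) + 2 * s * (∑ i, u i) + (Fintype.card ι : ℝ) * s ^ 2 := by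
      calc ∑ i, x i ^ 2 = ∑ i, (u i ^ 2 + 2 * s * u i + s ^ 2) :=
            Finset.sum_congr rfl fun i _ => by rw [hxu i]; ring
        _ = _ := by
            rw [Finset.sum_add_distrib, Finset.sum_add_distrib, ← Finset.mul_sum,
              Finset.sum_const, Finset.card_univ, nsmul_eq_mul]
    rw [step, husum, ← hM]; ring
  have hu2 : 0 ≤ ∑ i, u i ^ 2 := Finset.sum_nonneg fun i _ => sq_nonneg _
  rw [hx2, div_mul_eq_mul_div, div_le_iff₀ (by positivity)]
  nlinarith [mul_le_mul_of_nonneg_left hQ1 hM0.le, mul_le_mul_of_nonneg_left hQ2 hM0.le,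
    mul_le_mul_of_nonneg_right hSfM (mul_nonneg hβ0 hu2), sq_nonneg s]


lemma spectrum_eigvec {n : ℕ} {M : Matrix (Fin n) (Fin n) ℂ} {μ : ℂ}
    (h : μ ∈ spectrum ℂ M) : ∃ z : Fin n → ℂ, z ≠ 0 ∧ M.mulVec z = μ • z := by
  rw [spectrum.mem_iff, Matrix.isUnit_iff_isUnit_det] at h
  have hdet : ((algebraMap ℂ (Matrix (Fin n) (Fin n) ℂ)) μ - M).det = 0 := by
    by_contra h0
    exact h (isUnit_iff_ne_zero.mpr h0)
  obtain ⟨v, hv0, hv⟩ := (Matrix.exists_mulVec_eq_zero_iff).mpr hdet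
  refine ⟨v, hv0, ?_⟩
  rw [Matrix.sub_mulVec, Matrix.algebraMap_eq_diagonal, sub_eq_zero] at hv
  rw [← hv]
  ext i
  simp [Matrix.mulVec_diagonal]

end Aux

/-- For a connected weighted graph on `n` nodes whose sink-removed graph `Ḡ` is also
connected, `λ̲ = 1 - ρ(P̲)` satisfies
`λ̲ ≥ (λ̄₂ / (2 vol_max (n-1))) ∑_{i ≠ sink} w_{i,sink} / (w_{i,sink} + λ̄₂)`,
where `λ̄₂` is the Fiedler eigenvalue of the Laplacian of `Ḡ` and `vol_max` the maximum
volume. -/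
theorem stmt17 {n : ℕ} (hn : 2 ≤ n) (A : Matrix (Fin n) (Fin n) ℝ)
    (hsym : A.IsSymm) (hnonneg : ∀ u v, 0 ≤ A u v)
    (hconn : (SimpleGraph.fromRel fun u v => A u v ≠ 0).Connected)
    (d : Fin n → ℝ) (hd : ∀ u, d u = ∑ v, A u v) (hpos : ∀ u, 0 < d u)
    (sink : Fin n)
    (hconnbar :
      (SimpleGraph.fromRel fun u v : {i : Fin n // i ≠ sink} => A u.1 v.1 ≠ 0).Connected)
    (P Punder : Matrix (Fin n) (Fin n) ℝ)
    (hP : P = (Matrix.diagonal fun u => (d u)⁻¹) * A)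
    (hPunder : ∀ i j, Punder i j = if i = sink ∨ j = sink then 0 else P i j)
    (Lbar : Matrix {i : Fin n // i ≠ sink} {i : Fin n // i ≠ sink} ℝ)
    (hLbar : ∀ i j, Lbar i j =
      (if i = j then ∑ k : {i : Fin n // i ≠ sink}, A i.1 k.1 else 0) - A i.1 j.1)
    (volmax : ℝ)
    (hmax : (∀ u, d u ≤ volmax) ∧ ∃ u, d u = volmax) :
    1 - specRad Punder ≥
      fiedler Lbar / (2 * volmax * ((n : ℝ) - 1)) *
        ∑ i ∈ Finset.univ.erase sink, A i sink / (A i sink + fiedler Lbar) := by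
  classical
  -- setup
  set β := fiedler Lbar with hβdef
  set B : Matrix {i : Fin n // i ≠ sink} {i : Fin n // i ≠ sink} ℝ :=
    Matrix.of (fun i j => A i.1 j.1) with hBdef
  have hsymB : ∀ i j, B i j = B j i := fun i j => hsym.apply j.1 i.1
  have hnnB : ∀ i j, 0 ≤ B i j := fun i j => hnonneg i.1 j.1
  have hLB : ∀ i j, Lbar i j = (if i = j then ∑ k, B i k else 0) - B i j := hLbar
  obtain ⟨i₀, hi₀⟩ := Fintype.exists_ne_of_one_lt_card (by simp; omega) sink
  haveI : Nonempty {i : Fin n // i ≠ sink} := ⟨⟨i₀, hi₀⟩⟩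
  have hvol : 0 < volmax := by
    obtain ⟨u0, hu0⟩ := hmax.2
    exact hu0 ▸ hpos u0
  have hMnat : Fintype.card {i : Fin n // i ≠ sink} = n - 1 := by
    have h1 := Fintype.card_subtype_compl (fun x : Fin n => x = sink)
    have h2 : Fintype.card {x : Fin n // x = sink} = 1 := Fintype.card_subtype_eq sink
    simpa [h2] using h1
  have hM : (Fintype.card {i : Fin n // i ≠ sink} : ℝ) = (n : ℝ) - 1 := by
    rw [hMnat, Nat.cast_sub (by omega)]
    norm_num
  have hM0 : (0:ℝ) < (n : ℝ) - 1 := by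
    have : (2:ℝ) ≤ (n:ℝ) := by exact_mod_cast hn
    linarith
  set w : {i : Fin n // i ≠ sink} → ℝ := fun i => A i.1 sink with hwdef
  have hw : ∀ i, 0 ≤ w i := fun i => hnonneg i.1 sink
  have key := core_ineq B hsymB hnnB Lbar hLB w hw
  rw [hM] at key
  -- subtype sum conversion
  have hsubty0 : ∀ g : Fin n → ℝ,
      ∑ i ∈ Finset.univ.erase sink, g i = ∑ i : {i : Fin n // i ≠ sink}, g i.1 :=
    fun g => Finset.sum_subtype _ (fun x => by simp [Finset.mem_erase]) g
  have hsubty : ∀ g : Fin n → ℝ, g sink = 0 →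
      ∑ i, g i = ∑ i : {i : Fin n // i ≠ sink}, g i.1 := by
    intro g hg
    rw [← Finset.add_sum_erase Finset.univ g (Finset.mem_univ sink), hg, zero_add]
    exact hsubty0 g
  set Sf : ℝ := ∑ i : {i : Fin n // i ≠ sink}, w i / (w i + β) with hSfdef
  have hSfeq : ∑ i ∈ Finset.univ.erase sink, A i sink / (A i sink + β) = Sf :=
    hsubty0 (fun i => A i sink / (A i sink + β))
  set c : ℝ := β / (2 * volmax * ((n : ℝ) - 1)) * Sf with hcdef
  have hβ0 : 0 ≤ β := fiedler_nonneg B hsymB hnnB Lbar hLB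
  have hSf0 : 0 ≤ Sf :=
    Finset.sum_nonneg fun i _ => div_nonneg (hw i) (add_nonneg (hw i) hβ0)
  have hc0 : 0 ≤ c := by
    apply mul_nonneg _ hSf0
    apply div_nonneg hβ0
    positivity
  have hd_split : ∀ i : {i : Fin n // i ≠ sink}, (∑ k, B i k) + w i = d i.1 := by
    intro i
    have h2 := Finset.add_sum_erase Finset.univ (fun k => A i.1 k) (Finset.mem_univ sink)
    rw [hd, ← h2, hsubty0 (fun k => A i.1 k)]
    show (∑ k : {i : Fin n // i ≠ sink}, A i.1 k.1) + A i.1 sink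
      = A i.1 sink + ∑ k : {i : Fin n // i ≠ sink}, A i.1 k.1
    ring
  -- c * volmax = β * Sf / (2 * (n-1))
  have hcv : c * volmax = β * Sf / (2 * ((n : ℝ) - 1)) := by
    rw [hcdef]
    field_simp
  -- c ≤ 1
  have hc1 : c ≤ 1 := by
    set a : {i : Fin n // i ≠ sink} := ⟨i₀, hi₀⟩ with hadef
    set e : {i : Fin n // i ≠ sink} → ℝ := fun j => if j = a then 1 else 0 with hedef
    have h1 := key e
    have he2 : ∑ i, e i ^ 2 = 1 := by
      have : ∀ j, e j ^ 2 = e j := by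
        intro j; rw [hedef]; dsimp only; split <;> norm_num
      rw [Finset.sum_congr rfl fun j _ => this j, hedef]
      simp
    have hq1 : ∑ i, (∑ k, B i k) * e i ^ 2 = ∑ k, B a k := by
      have : ∀ j, (∑ k, B j k) * e j ^ 2 = if j = a then ∑ k, B a k else 0 := by
        intro j; rw [hedef]; dsimp only; split
        · rename_i h; rw [h]; norm_num
        · norm_num
      rw [Finset.sum_congr rfl fun j _ => this j]
      simp
    have hq2 : ∑ i, ∑ j, B i j * e i * e j = B a a := by
      have inner : ∀ i, ∑ j, B i j * e i * e j = (if i = a then B i a else 0) := by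
        intro i
        have hterm : ∀ j, B i j * e i * e j
            = if j = a then (if i = a then B i a else 0) else 0 := by
          intro j
          rw [hedef]; dsimp only
          by_cases hj : j = a <;> by_cases hi : i = a <;> simp [hi, hj]
        rw [Finset.sum_congr rfl fun j _ => hterm j]
        simp
      rw [Finset.sum_congr rfl fun i _ => inner i]
      simp
    have hwq : ∑ i, w i * e i ^ 2 = w a := by
      have : ∀ j, w j * e j ^ 2 = if j = a then w a else 0 := by
        intro j; rw [hedef]; dsimp only; split
        · rename_i h; rw [h]; norm_num
        · norm_num
      rw [Finset.sum_congr rfl fun j _ => this j]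
      simp
    rw [he2, mul_one, quadform B Lbar hLB e, hq1, hq2, hwq] at h1
    have hda : (∑ k, B a k) + w a = d a.1 := hd_split a
    have hBaa : 0 ≤ B a a := hnnB a a
    have hdvol : d a.1 ≤ volmax := hmax.1 a.1
    have hkey1 : β * Sf / (2 * ((n:ℝ) - 1)) ≤ volmax := by linarith
    rw [← mul_le_mul_iff_left₀ hvol, one_mul, hcv]
    exact hkey1
  -- spectral bound
  have hbound : ∀ μ ∈ spectrum ℂ (Punder.map (Complex.ofReal)), ‖μ‖ ≤ 1 - c := by
    intro μ hμ
    obtain ⟨z, hz0, hzeq⟩ := spectrum_eigvec hμ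
    by_cases hμ0 : μ = 0
    · subst hμ0; simp; linarith
    have hmu_entry : ∀ i, ∑ j, ((Punder i j : ℝ) : ℂ) * z j = μ * z i := by
      intro i
      have h := congrFun hzeq i
      simpa [Matrix.mulVec, dotProduct, Matrix.map_apply, Pi.smul_apply,
        smul_eq_mul] using h
    have hzsink : z sink = 0 := by
      have h0 := hmu_entry sink
      have hz : ∀ j, ((Punder sink j : ℝ) : ℂ) * z j = 0 := by
        intro j; rw [hPunder]; simp
      rw [Finset.sum_congr rfl fun j _ => hz j] at h0
      simp only [Finset.sum_const_zero] at h0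
      rcases mul_eq_zero.mp h0.symm with h | h
      · exact absurd h hμ0
      · exact h
    set y : Fin n → ℝ := fun i => ‖z i‖ with hydef
    have hysink : y sink = 0 := by rw [hydef]; simp [hzsink]
    have dPu : ∀ i j, d i * Punder i j = if i = sink ∨ j = sink then 0 else A i j := by
      intro i j
      rw [hPunder]
      split
      · rw [mul_zero]
      · rw [hP, Matrix.diagonal_mul, ← mul_assoc, mul_inv_cancel₀ (hpos i).ne', one_mul]
    have hDnn : 0 ≤ ∑ i, d i * y i ^ 2 :=
      Finset.sum_nonneg fun i _ => mul_nonneg (hpos i).le (sq_nonneg _)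
    have habs : ‖μ‖ * (∑ i, d i * y i ^ 2)
        ≤ ∑ i, ∑ j, (if i = sink ∨ j = sink then 0 else A i j) * y i * y j := by
      have hT2 : ∑ i, (d i : ℂ) * ((starRingEnd ℂ) (z i) * (μ * z i))
          = ∑ i, ∑ j, (((if i = sink ∨ j = sink then 0 else A i j : ℝ)) : ℂ)
              * ((starRingEnd ℂ) (z i) * z j) := by
        refine Finset.sum_congr rfl fun i _ => ?_
        rw [← hmu_entry i, Finset.mul_sum, Finset.mul_sum]
        refine Finset.sum_congr rfl fun j _ => ?_
        have hcast : ((if i = sink ∨ j = sink then 0 else A i j : ℝ) : ℂ)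
            = (d i : ℂ) * ((Punder i j : ℝ) : ℂ) := by
          rw [← dPu i j]; push_cast; ring
        rw [hcast]; ring
      have hT1 : ∑ i, (d i : ℂ) * ((starRingEnd ℂ) (z i) * (μ * z i))
          = μ * ((∑ i, d i * y i ^ 2 : ℝ) : ℂ) := by
        push_cast
        rw [Finset.mul_sum]
        refine Finset.sum_congr rfl fun i _ => ?_
        have h1 : (starRingEnd ℂ) (z i) * z i = ((y i ^ 2 : ℝ) : ℂ) := by
          rw [mul_comm, Complex.mul_conj]
          norm_cast
          simp only [hydef]
          rw [Complex.sq_norm]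
        calc (d i : ℂ) * ((starRingEnd ℂ) (z i) * (μ * z i))
            = μ * ((d i : ℂ) * ((starRingEnd ℂ) (z i) * z i)) := by ring
          _ = μ * ((d i : ℂ) * ((y i ^ 2 : ℝ) : ℂ)) := by rw [h1]
          _ = _ := by push_cast; ring
      have heq := congrArg norm (hT1.symm.trans hT2)
      rw [norm_mul, Complex.norm_of_nonneg hDnn] at heq
      rw [heq]
      calc ‖(∑ i, ∑ j, (((if i = sink ∨ j = sink then 0 else A i j : ℝ)) : ℂ)
              * ((starRingEnd ℂ) (z i) * z j))‖
          ≤ ∑ i, ‖(∑ j, (((if i = sink ∨ j = sink then 0 else A i j : ℝ)) : ℂ)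
              * ((starRingEnd ℂ) (z i) * z j))‖ := norm_sum_le _ _
        _ ≤ ∑ i, ∑ j, ‖((((if i = sink ∨ j = sink then 0 else A i j : ℝ)) : ℂ)
              * ((starRingEnd ℂ) (z i) * z j))‖ :=
            Finset.sum_le_sum fun i _ => norm_sum_le _ _
        _ = ∑ i, ∑ j, (if i = sink ∨ j = sink then 0 else A i j) * y i * y j := by
            refine Finset.sum_congr rfl fun i _ => Finset.sum_congr rfl fun j _ => ?_
            simp only [norm_mul, Complex.norm_real, Real.norm_eq_abs, Complex.norm_conj, hydef]
            have hA' : (0:ℝ) ≤ if i = sink ∨ j = sink then 0 else A i j := by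
              split
              · exact le_refl 0
              · exact hnonneg i j
            rw [_root_.abs_of_nonneg hA']
            ring
    set x : {i : Fin n // i ≠ sink} → ℝ := fun i => y i.1 with hxdef
    have r1 : ∑ i, d i * y i ^ 2 = ∑ i : {i : Fin n // i ≠ sink}, d i.1 * x i ^ 2 :=
      hsubty (fun i => d i * y i ^ 2) (by show d sink * y sink ^ 2 = 0; rw [hysink]; ring)
    have r2 : ∑ i, ∑ j, (if i = sink ∨ j = sink then 0 else A i j) * y i * y j
        = ∑ i : {i : Fin n // i ≠ sink}, ∑ j : {i : Fin n // i ≠ sink}, B i j * x i * x j := by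
      rw [hsubty (fun i => ∑ j, (if i = sink ∨ j = sink then 0 else A i j) * y i * y j)
        (by simp)]
      refine Finset.sum_congr rfl fun i _ => ?_
      rw [hsubty (fun j => (if i.1 = sink ∨ j = sink then 0 else A i.1 j) * y i.1 * y j)
        (by simp)]
      refine Finset.sum_congr rfl fun j _ => ?_
      rw [if_neg (by push_neg; exact ⟨i.2, j.2⟩)]
      rfl
    have r3 : ∑ i : {i : Fin n // i ≠ sink}, ∑ j : {i : Fin n // i ≠ sink}, B i j * x i * x j
        = (∑ i : {i : Fin n // i ≠ sink}, d i.1 * x i ^ 2)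
          - (x ⬝ᵥ Lbar.mulVec x + ∑ i, w i * x i ^ 2) := by
      rw [quadform B Lbar hLB x]
      have hds : ∑ i : {i : Fin n // i ≠ sink}, d i.1 * x i ^ 2
          = ∑ i, ((∑ k, B i k) * x i ^ 2 + w i * x i ^ 2) := by
        refine Finset.sum_congr rfl fun i _ => ?_
        rw [← hd_split i]; ring
      rw [hds, Finset.sum_add_distrib]; ring
    have r4 : c * ∑ i : {i : Fin n // i ≠ sink}, d i.1 * x i ^ 2
        ≤ x ⬝ᵥ Lbar.mulVec x + ∑ i, w i * x i ^ 2 := by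
      have h5 : ∑ i : {i : Fin n // i ≠ sink}, d i.1 * x i ^ 2 ≤ volmax * ∑ i, x i ^ 2 := by
        rw [Finset.mul_sum]
        exact Finset.sum_le_sum fun i _ =>
          mul_le_mul_of_nonneg_right (hmax.1 i.1) (sq_nonneg _)
      calc c * ∑ i : {i : Fin n // i ≠ sink}, d i.1 * x i ^ 2
          ≤ c * (volmax * ∑ i, x i ^ 2) := mul_le_mul_of_nonneg_left h5 hc0
        _ = (c * volmax) * ∑ i, x i ^ 2 := by ring
        _ = β * Sf / (2 * ((n:ℝ) - 1)) * ∑ i, x i ^ 2 := by rw [hcv]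
        _ = fiedler Lbar * Sf / (2 * ((n:ℝ) - 1)) * ∑ i, x i ^ 2 := by rw [hβdef]
        _ ≤ _ := key x
    have hDpos : 0 < ∑ i, d i * y i ^ 2 := by
      obtain ⟨k, hk⟩ := Function.ne_iff.mp hz0
      refine Finset.sum_pos' (fun i _ => mul_nonneg (hpos i).le (sq_nonneg _))
        ⟨k, Finset.mem_univ k, ?_⟩
      have hyk : 0 < y k := norm_pos_iff.mpr hk
      exact mul_pos (hpos k) (pow_pos hyk 2)
    have final : ‖μ‖ * (∑ i, d i * y i ^ 2) ≤ (1 - c) * (∑ i, d i * y i ^ 2) := by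
      calc ‖μ‖ * (∑ i, d i * y i ^ 2)
          ≤ ∑ i, ∑ j, (if i = sink ∨ j = sink then 0 else A i j) * y i * y j := habs
        _ = ∑ i : {i : Fin n // i ≠ sink}, ∑ j : {i : Fin n // i ≠ sink}, B i j * x i * x j := r2
        _ ≤ (∑ i : {i : Fin n // i ≠ sink}, d i.1 * x i ^ 2)
              - c * ∑ i : {i : Fin n // i ≠ sink}, d i.1 * x i ^ 2 := by
            rw [r3]; linarith [r4]
        _ = (1 - c) * ∑ i : {i : Fin n // i ≠ sink}, d i.1 * x i ^ 2 := by ring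
        _ = (1 - c) * (∑ i, d i * y i ^ 2) := by rw [← r1]
    exact le_of_mul_le_mul_right final hDpos
  have hsup : specRad Punder ≤ 1 - c := by
    apply Real.sSup_le _ (by linarith)
    rintro r ⟨μ, hμ, rfl⟩
    exact hbound μ hμ
  rw [ge_iff_le, hSfeq, ← hcdef]
  linarith
end

section
/- For any connected weighted graph G with maximum volume vol_max and edge expansion θ(G), the second smallest Laplacian eigenvalue satisfies λ₂(G) ≥ vol_max − (vol_max² − θ(G)²)^{1/2}. -/
open Matrix

/-- Edge expansion of a weighted graph with adjacency matrix `A`: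
`θ(G) = min_{S ≠ ∅, |S| ≤ n/2} w(S, V∖S)/|S|`. -/
noncomputable def edgeExpansion {n : ℕ} (A : Matrix (Fin n) (Fin n) ℝ) : ℝ :=
  sInf {r : ℝ | ∃ S : Finset (Fin n), S.Nonempty ∧ 2 * S.card ≤ n ∧
    r = (∑ i ∈ S, ∑ j ∈ Sᶜ, A i j) / S.card}


section MoharAux
open Finset

lemma quadform_s19 {n : ℕ} (A : Matrix (Fin n) (Fin n) ℝ) (hsym : A.IsSymm)
    (d : Fin n → ℝ) (hd : ∀ u, d u = ∑ v, A u v) (z : Fin n → ℝ) :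
    z ⬝ᵥ (Matrix.diagonal d - A).mulVec z
      = (∑ u, ∑ v, A u v * (z u - z v) ^ 2) / 2 := by
  have hswap : ∑ u, ∑ v, A u v * z v ^ 2 = ∑ u, ∑ v, A u v * z u ^ 2 := by
    rw [Finset.sum_comm]
    exact Finset.sum_congr rfl fun u _ => Finset.sum_congr rfl fun v _ => by
      rw [hsym.apply]
  have lhs : z ⬝ᵥ (Matrix.diagonal d - A).mulVec z
      = ∑ u, (d u * z u ^ 2 - ∑ v, A u v * (z u * z v)) := by
    simp only [dotProduct, mulVec, Matrix.sub_apply, diagonal_apply]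
    refine Finset.sum_congr rfl fun u _ => ?_
    rw [Finset.mul_sum]
    have hterm : ∀ i : Fin n, z u * (((if u = i then d u else 0) - A u i) * z i)
        = (if u = i then d u * (z u * z i) else 0) - A u i * (z u * z i) := fun i => by
      split <;> ring
    rw [Finset.sum_congr rfl fun i _ => hterm i, Finset.sum_sub_distrib, Finset.sum_ite_eq,
      if_pos (Finset.mem_univ u)]
    congr 1
    ring
  have rhs : ∑ u, ∑ v, A u v * (z u - z v) ^ 2
      = ∑ u, (2 * (d u * z u ^ 2) - 2 * ∑ v, A u v * (z u * z v)) := by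
    have expand : ∀ u : Fin n, ∑ v, A u v * (z u - z v) ^ 2
        = (∑ v, A u v * z u ^ 2) + (∑ v, A u v * z v ^ 2) - 2 * ∑ v, A u v * (z u * z v) := by
      intro u
      rw [Finset.mul_sum, ← Finset.sum_add_distrib, ← Finset.sum_sub_distrib]
      exact Finset.sum_congr rfl fun v _ => by ring
    calc ∑ u, ∑ v, A u v * (z u - z v) ^ 2
        = ∑ u, ((∑ v, A u v * z u ^ 2) + (∑ v, A u v * z v ^ 2) - 2 * ∑ v, A u v * (z u * z v)) :=
          Finset.sum_congr rfl fun u _ => expand u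
      _ = (∑ u, ∑ v, A u v * z u ^ 2) + (∑ u, ∑ v, A u v * z v ^ 2)
            - 2 * ∑ u, ∑ v, A u v * (z u * z v) := by
          rw [Finset.sum_sub_distrib, Finset.sum_add_distrib, Finset.mul_sum]
      _ = ∑ u, (2 * (d u * z u ^ 2) - 2 * ∑ v, A u v * (z u * z v)) := by
          rw [hswap, Finset.sum_sub_distrib, Finset.mul_sum]
          congr 1
          rw [← two_mul, Finset.mul_sum]
          exact Finset.sum_congr rfl fun u _ => by rw [hd, Finset.sum_mul]
  have rhs2 : ∑ u, (2 * (d u * z u ^ 2) - 2 * ∑ v, A u v * (z u * z v))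
      = 2 * ∑ u, (d u * z u ^ 2 - ∑ v, A u v * (z u * z v)) := by
    rw [Finset.mul_sum]
    exact Finset.sum_congr rfl fun u _ => by ring
  rw [lhs, rhs, rhs2]
  ring

lemma sum_sq_pos_of_ne_zero {n : ℕ} {y : Fin n → ℝ} (hy : y ≠ 0) :
    0 < ∑ i, (y i) ^ 2 := by
  obtain ⟨i, hi⟩ := Function.ne_iff.1 hy
  have : (0:ℝ) < (y i)^2 := by have : y i ≠ 0 := hi; positivity
  exact this.trans_le (Finset.single_le_sum (fun j _ => sq_nonneg (y j)) (Finset.mem_univ i))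

lemma normalize_mem {n : ℕ} (L : Matrix (Fin n) (Fin n) ℝ) {y : Fin n → ℝ} (hy : y ≠ 0)
    (hsum : (∑ i, y i) = 0) :
    ∃ x : Fin n → ℝ, (∑ i, x i) = 0 ∧ (∑ i, (x i)^2) = 1 ∧
      x ⬝ᵥ L.mulVec x = (y ⬝ᵥ L.mulVec y) / (∑ i, (y i)^2) := by
  set s := ∑ i, (y i)^2 with hs
  have hspos : 0 < s := sum_sq_pos_of_ne_zero hy
  set c := (Real.sqrt s)⁻¹ with hc
  have hc2 : c ^ 2 = s⁻¹ := by
    rw [hc, inv_pow, Real.sq_sqrt hspos.le]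
  refine ⟨c • y, ?_, ?_, ?_⟩
  · simp only [Pi.smul_apply, smul_eq_mul, ← Finset.mul_sum, hsum, mul_zero]
  · have : ∑ i, (c * y i)^2 = c^2 * s := by
      rw [hs, Finset.mul_sum]
      exact Finset.sum_congr rfl fun i _ => by ring
    simpa only [Pi.smul_apply, smul_eq_mul, this, hc2] using inv_mul_cancel₀ hspos.ne'
  · rw [Matrix.mulVec_smul, dotProduct_smul, smul_dotProduct]
    simp only [smul_eq_mul]
    rw [← mul_assoc, ← sq, hc2]
    field_simp

lemma fiedler_min {n : ℕ} (hn : 2 ≤ n) (L : Matrix (Fin n) (Fin n) ℝ) :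
    ∃ x : Fin n → ℝ, (∑ i, x i) = 0 ∧ (∑ i, (x i)^2) = 1 ∧
      fiedler L = x ⬝ᵥ L.mulVec x ∧
      ∀ y : Fin n → ℝ, (∑ i, y i) = 0 →
        (x ⬝ᵥ L.mulVec x) * (∑ i, (y i)^2) ≤ y ⬝ᵥ L.mulVec y := by
  set K : Set (Fin n → ℝ) := {x | (∑ i, x i) = 0 ∧ (∑ i, (x i)^2) = 1} with hK
  -- K is nonempty
  have hKne : K.Nonempty := by
    set y : Fin n → ℝ := fun i => (if i = ⟨0, by omega⟩ then 1 else 0) - (1 : ℝ)/n with hy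
    have hny : y ≠ 0 := by
      intro h
      have := congrFun h ⟨0, by omega⟩
      simp only [hy, if_pos rfl, Pi.zero_apply, if_true] at this
      have hn' : (1:ℝ)/n ≤ 1/2 := by
        apply div_le_div_of_nonneg_left one_pos.le two_pos
        exact_mod_cast hn
      linarith
    have hsumy : (∑ i, y i) = 0 := by
      simp only [hy, Finset.sum_sub_distrib, Finset.sum_ite_eq', Finset.mem_univ, if_true,
        Finset.sum_const, Finset.card_univ, Fintype.card_fin, nsmul_eq_mul]
      rw [mul_one_div, div_self (by positivity : (n:ℝ) ≠ 0)]
      ring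
    obtain ⟨x, h1, h2, _⟩ := normalize_mem L hny hsumy
    exact ⟨x, h1, h2⟩
  -- K is compact
  have hsumcont : Continuous fun x : Fin n → ℝ => ∑ i, x i :=
    continuous_finset_sum _ fun i _ => continuous_apply i
  have hsqcont : Continuous fun x : Fin n → ℝ => ∑ i, (x i)^2 :=
    continuous_finset_sum _ fun i _ => (continuous_apply i).pow 2
  have hKclosed : IsClosed K := by
    have : K = (fun x : Fin n → ℝ => ∑ i, x i) ⁻¹' {0} ∩
        (fun x : Fin n → ℝ => ∑ i, (x i)^2) ⁻¹' {1} := by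
      ext x; simp [hK]
    rw [this]
    exact (isClosed_singleton.preimage hsumcont).inter (isClosed_singleton.preimage hsqcont)
  have hKbdd : Bornology.IsBounded K := by
    apply (Metric.isBounded_closedBall (x := (0 : Fin n → ℝ)) (r := 1)).subset
    intro x hx
    rw [Metric.mem_closedBall, dist_zero_right]
    apply pi_norm_le_iff_of_nonneg zero_le_one |>.2
    intro i
    rw [Real.norm_eq_abs, ← Real.sqrt_sq_eq_abs]
    apply Real.sqrt_le_one.2
    calc (x i)^2 ≤ ∑ j, (x j)^2 :=
          Finset.single_le_sum (fun j _ => sq_nonneg (x j)) (Finset.mem_univ i)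
      _ = 1 := hx.2
  have hKcomp : IsCompact K := Metric.isCompact_of_isClosed_isBounded hKclosed hKbdd
  have hQ : Continuous fun x : Fin n → ℝ => x ⬝ᵥ L.mulVec x := by
    simp only [dotProduct, mulVec]
    exact continuous_finset_sum _ fun i _ => (continuous_apply i).mul
      (continuous_finset_sum _ fun j _ => continuous_const.mul (continuous_apply j))
  obtain ⟨x₀, hx₀K, hmin⟩ := hKcomp.exists_isMinOn hKne hQ.continuousOn
  have hminK : ∀ y ∈ K, x₀ ⬝ᵥ L.mulVec x₀ ≤ y ⬝ᵥ L.mulVec y := fun y hy => hmin hy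
  have hmin' : ∀ y : Fin n → ℝ, (∑ i, y i) = 0 →
      (x₀ ⬝ᵥ L.mulVec x₀) * (∑ i, (y i)^2) ≤ y ⬝ᵥ L.mulVec y := by
    intro y hysum
    by_cases hy0 : y = 0
    · simp [hy0]
    · obtain ⟨x, h1, h2, h3⟩ := normalize_mem L hy0 hysum
      have := hminK x ⟨h1, h2⟩
      rw [h3, le_div_iff₀ (sum_sq_pos_of_ne_zero hy0)] at this
      linarith
  refine ⟨x₀, hx₀K.1, hx₀K.2, ?_, hmin'⟩
  -- fiedler L = Q x₀
  have hx₀ne : x₀ ≠ 0 := by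
    intro h
    have := hx₀K.2
    rw [h] at this
    simp at this
  apply le_antisymm
  · apply csInf_le
    · refine ⟨x₀ ⬝ᵥ L.mulVec x₀, ?_⟩
      rintro r ⟨y, hy0, hysum, rfl⟩
      rw [le_div_iff₀ (sum_sq_pos_of_ne_zero hy0)]
      exact hmin' y hysum
    · exact ⟨x₀, hx₀ne, hx₀K.1, by rw [hx₀K.2, div_one]⟩
  · apply le_csInf
    · exact ⟨_, x₀, hx₀ne, hx₀K.1, by rw [hx₀K.2, div_one]⟩
    · rintro r ⟨y, hy0, hysum, rfl⟩
      rw [le_div_iff₀ (sum_sq_pos_of_ne_zero hy0)]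
      exact hmin' y hysum

lemma dot_symm {n : ℕ} (L : Matrix (Fin n) (Fin n) ℝ) (hLs : ∀ i j, L i j = L j i)
    (z w : Fin n → ℝ) : z ⬝ᵥ L.mulVec w = w ⬝ᵥ L.mulVec z := by
  simp only [dotProduct, mulVec, Finset.mul_sum]
  rw [Finset.sum_comm]
  exact Finset.sum_congr rfl fun i _ => Finset.sum_congr rfl fun j _ => by
    rw [hLs j i]; ring

lemma eigenvec {n : ℕ} (hn : 1 ≤ n) (L : Matrix (Fin n) (Fin n) ℝ)
    (hLs : ∀ i j, L i j = L j i) (hrow : ∀ i, ∑ j, L i j = 0)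
    (x : Fin n → ℝ) (hx1 : (∑ i, x i) = 0) (hx2 : (∑ i, (x i)^2) = 1)
    (hmin : ∀ y : Fin n → ℝ, (∑ i, y i) = 0 →
      (x ⬝ᵥ L.mulVec x) * (∑ i, (y i)^2) ≤ y ⬝ᵥ L.mulVec y) :
    L.mulVec x = (x ⬝ᵥ L.mulVec x) • x := by
  set lam := x ⬝ᵥ L.mulVec x with hlam
  set v := L.mulVec x - lam • x with hv
  -- Step 1: orthogonality
  have step1 : ∀ y : Fin n → ℝ, (∑ i, y i) = 0 → v ⬝ᵥ y = 0 := by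
    intro y hysum
    set a := x ⬝ᵥ L.mulVec y - lam * (x ⬝ᵥ y) with ha
    have key : ∀ t : ℝ, 0 ≤ 2*t*a + t^2 * (y ⬝ᵥ L.mulVec y - lam * (∑ i, (y i)^2)) := by
      intro t
      have hsum' : (∑ i, (x i + t * y i)) = 0 := by
        rw [Finset.sum_add_distrib, hx1, ← Finset.mul_sum, hysum, mul_zero, add_zero]
      have h := hmin (x + t • y) (by simpa using hsum')
      have hQ : (x + t • y) ⬝ᵥ L.mulVec (x + t • y)
          = lam + 2*t*(x ⬝ᵥ L.mulVec y) + t^2 * (y ⬝ᵥ L.mulVec y) := by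
        rw [Matrix.mulVec_add, Matrix.mulVec_smul, dotProduct_add,
          add_dotProduct, add_dotProduct, dotProduct_smul,
          smul_dotProduct, smul_dotProduct, dotProduct_smul,
          dot_symm L hLs y x]
        simp only [smul_eq_mul]
        ring
      have hS : (∑ i, ((x + t • y) i)^2)
          = 1 + 2*t*(x ⬝ᵥ y) + t^2 * (∑ i, (y i)^2) := by
        simp only [Pi.add_apply, Pi.smul_apply, smul_eq_mul]
        have : ∀ i : Fin n, (x i + t * y i)^2
            = x i ^2 + 2*t*(x i * y i) + t^2 * (y i)^2 := fun i => by ring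
        rw [Finset.sum_congr rfl fun i _ => this i]
        rw [Finset.sum_add_distrib, Finset.sum_add_distrib, hx2, ← Finset.mul_sum,
          ← Finset.mul_sum]
        rfl
      rw [hQ, hS] at h
      have : lam * (1 + 2*t*(x ⬝ᵥ y) + t^2 * (∑ i, (y i)^2))
          ≤ lam + 2*t*(x ⬝ᵥ L.mulVec y) + t^2 * (y ⬝ᵥ L.mulVec y) := h
      simp only [ha]
      nlinarith [this]
    have ha0 : a = 0 := by
      set b := y ⬝ᵥ L.mulVec y - lam * (∑ i, (y i)^2) with hb
      set c := (|b|+1)⁻¹ with hc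
      have hcpos : (0:ℝ) < c := by positivity
      have hcb : c * b < 1 := by
        have h1 : c * b ≤ c * |b| := mul_le_mul_of_nonneg_left (le_abs_self b) hcpos.le
        have h2 : c * |b| < 1 := by
          rw [hc, inv_mul_eq_div]
          exact (div_lt_one (by positivity)).2 (by linarith [abs_nonneg b])
        linarith
      have hk := key (-a * c)
      by_contra hane
      have h2 : 0 < a^2 := by positivity
      have h3 : 0 < a^2 * c := mul_pos h2 hcpos
      nlinarith [hk, h3, hcb]
    -- v ⬝ᵥ y = x ⬝ᵥ L y - lam ⟨x, y⟩ = a  (using symmetry)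
    have : v ⬝ᵥ y = a := by
      rw [hv, ha, sub_dotProduct, smul_dotProduct,
        dotProduct_comm (L.mulVec x) y, dot_symm L hLs y x]
      simp only [smul_eq_mul]
    rw [this, ha0]
  -- Step 2: v is constant
  have hconst : ∀ i j : Fin n, v i = v j := by
    intro i j
    by_cases hij : i = j
    · rw [hij]
    · set y : Fin n → ℝ := fun k => (if k = i then 1 else 0) - (if k = j then 1 else 0) with hy
      have hysum : (∑ k, y k) = 0 := by
        simp [hy, Finset.sum_sub_distrib]
      have := step1 y hysum
      simp only [dotProduct, hy, mul_sub] at this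
      rw [Finset.sum_sub_distrib] at this
      simp only [mul_ite, mul_one, mul_zero, Finset.sum_ite_eq', Finset.mem_univ,
        if_true] at this
      linarith
  -- Step 3: sum of v is zero
  have hsumv : (∑ i, v i) = 0 := by
    have h1 : (∑ i, L.mulVec x i) = 0 := by
      calc ∑ i, L.mulVec x i = ∑ j, (∑ i, L i j) * x j := by
            simp only [mulVec, dotProduct]
            rw [Finset.sum_comm]
            exact Finset.sum_congr rfl fun j _ => (Finset.sum_mul _ _ _).symm
        _ = 0 := by
            apply Finset.sum_eq_zero
            intro j _
            have hcol : (∑ i, L i j) = 0 := by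
              rw [Finset.sum_congr rfl fun i _ => hLs i j]
              exact hrow j
            rw [hcol, zero_mul]
    have h2 : (∑ i, v i) = (∑ i, L.mulVec x i) - lam * ∑ i, x i := by
      simp [hv, Finset.sum_sub_distrib, Finset.mul_sum]
    rw [h2, h1, hx1, mul_zero, sub_zero]
  -- conclude v = 0
  have hv0 : v = 0 := by
    funext i
    have h1 : (∑ j : Fin n, v j) = (n : ℝ) * v i := by
      rw [Finset.sum_congr rfl fun j _ => hconst j i]
      simp [Finset.card_univ, mul_comm]
    rw [h1] at hsumv
    have hn0 : (n:ℝ) ≠ 0 := by positivity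
    have := mul_eq_zero.1 hsumv
    simp only [Pi.zero_apply]
    tauto
  exact sub_eq_zero.1 (hv.symm.trans hv0)

lemma coarea {n : ℕ} (A : Matrix (Fin n) (Fin n) ℝ) (hsym : A.IsSymm)
    (hnonneg : ∀ u v, 0 ≤ A u v) (θ : ℝ)
    (hθ : ∀ S : Finset (Fin n), S.Nonempty → 2 * S.card ≤ n →
      θ * S.card ≤ ∑ i ∈ S, ∑ j ∈ Sᶜ, A i j) :
    ∀ k : ℕ, ∀ q : Fin n → ℝ, (∀ u, 0 ≤ q u) →
      (Finset.univ.filter fun u => q u ≠ 0).card = k →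
      2 * (Finset.univ.filter fun u => q u ≠ 0).card ≤ n →
      2 * θ * (∑ u, q u) ≤ ∑ u, ∑ v, A u v * |q u - q v| := by
  intro k
  induction k using Nat.strong_induction_on with
  | _ k IH =>
  intro q hq hcard hsize
  set P := Finset.univ.filter fun u => q u ≠ 0 with hP
  by_cases hPne : P.Nonempty
  · -- inductive step
    obtain ⟨u₀, hu₀P, hu₀min⟩ := P.exists_min_image q hPne
    set m := q u₀ with hm
    have hm0 : 0 ≤ m := hq u₀
    have hmem : ∀ u, u ∈ P ↔ q u ≠ 0 := fun u => by simp [hP]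
    have hoff : ∀ u, u ∉ P → q u = 0 := fun u hu => by
      by_contra h; exact hu ((hmem u).2 h)
    have hgem : ∀ u, u ∈ P → m ≤ q u := fun u hu => hu₀min u hu
    set q' : Fin n → ℝ := fun u => if u ∈ P then q u - m else 0 with hq'
    have hq'0 : ∀ u, 0 ≤ q' u := by
      intro u
      simp only [hq']
      split
      · linarith [hgem u ‹_›]
      · exact le_refl 0
    -- support of q' is strictly smaller
    have hsupp' : (Finset.univ.filter fun u => q' u ≠ 0) ⊆ P.erase u₀ := by
      intro u hu
      simp only [Finset.mem_filter, Finset.mem_univ, true_and] at hu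
      have huP : u ∈ P := by
        by_contra h
        exact hu (by simp [hq', h])
      have hne : u ≠ u₀ := by
        intro h
        exact hu (by simp [hq', h, hu₀P, hm, sub_self])
      exact Finset.mem_erase.2 ⟨hne, huP⟩
    have hcard' : (Finset.univ.filter fun u => q' u ≠ 0).card < k := by
      calc (Finset.univ.filter fun u => q' u ≠ 0).card ≤ (P.erase u₀).card :=
            Finset.card_le_card hsupp'
        _ < P.card := Finset.card_erase_lt_of_mem hu₀P
        _ = k := hcard
    have hsize' : 2 * (Finset.univ.filter fun u => q' u ≠ 0).card ≤ n := by
      have h1 : (Finset.univ.filter fun u => q' u ≠ 0).card ≤ P.card :=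
        Finset.card_le_card (hsupp'.trans (Finset.erase_subset _ _))
      omega
    have hIH := IH _ hcard' q' hq'0 rfl hsize'
    -- sum identity
    have hdiff : ∀ u, q u - q' u = if u ∈ P then m else 0 := by
      intro u
      by_cases h : u ∈ P
      · simp [hq', h]
      · simp [hq', h, hoff u h]
    have hsumq : (∑ u, q u) = (∑ u, q' u) + m * P.card := by
      have h2 : (∑ u, (q u - q' u)) = m * P.card := by
        rw [Finset.sum_congr rfl fun u _ => hdiff u, Finset.sum_ite_mem,
          Finset.univ_inter, Finset.sum_const, nsmul_eq_mul, mul_comm]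
      rw [Finset.sum_sub_distrib] at h2
      linarith
    have hcut := hθ P hPne hsize
    -- pairwise inequality
    have hpair : ∀ u v, A u v * (|q' u - q' v|
        + ((if u ∈ P ∧ v ∉ P then m else 0) + (if v ∈ P ∧ u ∉ P then m else 0)))
        ≤ A u v * |q u - q v| := by
      intro u v
      apply mul_le_mul_of_nonneg_left _ (hnonneg u v)
      by_cases hu : u ∈ P <;> by_cases hv : v ∈ P
      · simp only [hq', if_pos hu, if_pos hv, hu, hv, not_true, and_false, if_neg,
          and_true]
        have h3 : (q u - m) - (q v - m) = q u - q v := by ring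
        rw [h3]
        simp
      · have h4 : q v = 0 := hoff v hv
        have h5 : 0 ≤ q u - m := by linarith [hgem u hu]
        simp only [hq', if_pos hu, if_neg hv, hu, hv]
        rw [sub_zero, abs_of_nonneg h5, h4, sub_zero, abs_of_nonneg (hq u)]
        simp
      · have h4 : q u = 0 := hoff u hu
        have h5 : 0 ≤ q v - m := by linarith [hgem v hv]
        simp only [hq', if_pos hv, if_neg hu, hu, hv]
        rw [zero_sub, abs_neg, abs_of_nonneg h5, h4, zero_sub, abs_neg,
          abs_of_nonneg (hq v)]
        simp
      · simp [hq', hu, hv, hoff u hu, hoff v hv]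
    -- summing the pairwise inequality
    have hsum1 : ∑ u, ∑ v, A u v * (|q' u - q' v|
        + ((if u ∈ P ∧ v ∉ P then m else 0) + (if v ∈ P ∧ u ∉ P then m else 0)))
        ≤ ∑ u, ∑ v, A u v * |q u - q v| :=
      Finset.sum_le_sum fun u _ => Finset.sum_le_sum fun v _ => hpair u v
    -- helper to evaluate indicator sums
    have key : ∀ B : Matrix (Fin n) (Fin n) ℝ,
        (∑ u, ∑ v, B u v * (if u ∈ P ∧ v ∉ P then m else 0))
        = m * ∑ i ∈ P, ∑ j ∈ Pᶜ, B i j := by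
      intro B
      have h6 : ∀ u v : Fin n, B u v * (if u ∈ P ∧ v ∉ P then m else 0)
          = (if u ∈ P then (1:ℝ) else 0) * (if v ∈ Pᶜ then B u v * m else 0) := by
        intro u v
        by_cases hu : u ∈ P <;> by_cases hv : v ∈ P <;>
          simp [hu, hv, Finset.mem_compl]
      calc (∑ u, ∑ v, B u v * (if u ∈ P ∧ v ∉ P then m else 0))
          = ∑ u, (if u ∈ P then (1:ℝ) else 0) * (∑ v, if v ∈ Pᶜ then B u v * m else 0) := by
            refine Finset.sum_congr rfl fun u _ => ?_
            rw [Finset.mul_sum]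
            exact Finset.sum_congr rfl fun v _ => h6 u v
        _ = ∑ u, (if u ∈ P then (∑ v, if v ∈ Pᶜ then B u v * m else 0) else 0) := by
            refine Finset.sum_congr rfl fun u _ => ?_
            split <;> simp
        _ = ∑ u ∈ P, ∑ v, (if v ∈ Pᶜ then B u v * m else 0) := by
            rw [Finset.sum_ite_mem, Finset.univ_inter]
        _ = ∑ u ∈ P, ∑ v ∈ Pᶜ, B u v * m := by
            refine Finset.sum_congr rfl fun u _ => ?_
            rw [Finset.sum_ite_mem, Finset.univ_inter]
        _ = m * ∑ i ∈ P, ∑ j ∈ Pᶜ, B i j := by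
            rw [Finset.mul_sum]
            refine Finset.sum_congr rfl fun u _ => ?_
            rw [Finset.mul_sum]
            exact Finset.sum_congr rfl fun v _ => by ring
    have hT1 : (∑ u, ∑ v, A u v * (if u ∈ P ∧ v ∉ P then m else 0))
        = m * ∑ i ∈ P, ∑ j ∈ Pᶜ, A i j := key A
    have hT2 : (∑ u, ∑ v, A u v * (if v ∈ P ∧ u ∉ P then m else 0))
        = m * ∑ i ∈ P, ∑ j ∈ Pᶜ, A i j := by
      rw [Finset.sum_comm]
      have h7 : ∀ v u : Fin n, A u v * (if v ∈ P ∧ u ∉ P then m else 0)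
          = Aᵀ v u * (if v ∈ P ∧ u ∉ P then m else 0) := by
        intro v u; rw [Matrix.transpose_apply]
      rw [Finset.sum_congr rfl fun v _ => Finset.sum_congr rfl fun u _ => h7 v u]
      rw [key Aᵀ]
      congr 1
      refine Finset.sum_congr rfl fun i _ => Finset.sum_congr rfl fun j _ => ?_
      rw [Matrix.transpose_apply, hsym.apply]
    -- expand LHS of hsum1
    have hexpand : ∑ u, ∑ v, A u v * (|q' u - q' v|
        + ((if u ∈ P ∧ v ∉ P then m else 0) + (if v ∈ P ∧ u ∉ P then m else 0)))
        = (∑ u, ∑ v, A u v * |q' u - q' v|)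
          + ((∑ u, ∑ v, A u v * (if u ∈ P ∧ v ∉ P then m else 0))
            + (∑ u, ∑ v, A u v * (if v ∈ P ∧ u ∉ P then m else 0))) := by
      have h8 : ∀ u : Fin n, ∑ v, A u v * (|q' u - q' v|
          + ((if u ∈ P ∧ v ∉ P then m else 0) + (if v ∈ P ∧ u ∉ P then m else 0)))
          = (∑ v, A u v * |q' u - q' v|)
            + ((∑ v, A u v * (if u ∈ P ∧ v ∉ P then m else 0))
              + (∑ v, A u v * (if v ∈ P ∧ u ∉ P then m else 0))) := by
        intro u
        rw [← Finset.sum_add_distrib, ← Finset.sum_add_distrib]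
        exact Finset.sum_congr rfl fun v _ => by ring
      rw [Finset.sum_congr rfl fun u _ => h8 u, Finset.sum_add_distrib,
        Finset.sum_add_distrib]
    have hmcut : m * (θ * P.card) ≤ m * ∑ i ∈ P, ∑ j ∈ Pᶜ, A i j :=
      mul_le_mul_of_nonneg_left hcut hm0
    rw [hexpand, hT1, hT2] at hsum1
    rw [hsumq]
    nlinarith [hsum1, hIH, hmcut]
  · -- base case : q = 0
    have hq0 : ∀ u, q u = 0 := by
      intro u
      by_contra h
      exact hPne ⟨u, by simp [hP, h]⟩
    have h1 : (∑ u, q u) = 0 := Finset.sum_eq_zero fun u _ => hq0 u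
    have h2 : ∑ u, ∑ v, A u v * |q u - q v| = 0 :=
      Finset.sum_eq_zero fun u _ => Finset.sum_eq_zero fun v _ => by
        rw [hq0 u, hq0 v, sub_zero, abs_zero, mul_zero]
    rw [h1, h2, mul_zero]

lemma mohar {n : ℕ} (A : Matrix (Fin n) (Fin n) ℝ) (hsym : A.IsSymm)
    (hnonneg : ∀ u v, 0 ≤ A u v) (d : Fin n → ℝ) (hd : ∀ u, d u = ∑ v, A u v)
    (θ V : ℝ) (hθ0 : 0 ≤ θ)
    (hθle : ∀ S : Finset (Fin n), S.Nonempty → 2 * S.card ≤ n →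
      θ * S.card ≤ ∑ i ∈ S, ∑ j ∈ Sᶜ, A i j)
    (hV : ∀ u, d u ≤ V) (lam : ℝ) (hlam0 : 0 ≤ lam) (hlamV : lam ≤ V)
    (h : Fin n → ℝ)
    (hEig : (Matrix.diagonal d - A).mulVec h = lam • h)
    (hpos : (Finset.univ.filter fun u => 0 < h u).Nonempty)
    (hsize : 2 * (Finset.univ.filter fun u => 0 < h u).card ≤ n) :
    θ ^ 2 ≤ lam * (2 * V - lam) := by
  set P := Finset.univ.filter fun u => 0 < h u with hP
  set g : Fin n → ℝ := fun u => max (h u) 0 with hg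
  have hg0 : ∀ u, 0 ≤ g u := fun u => le_max_right _ _
  have hgh : ∀ u, h u ≤ g u := fun u => le_max_left _ _
  have hgP : ∀ u, u ∈ P → g u = h u := fun u hu => by
    simp only [hP, Finset.mem_filter] at hu
    exact max_eq_left hu.2.le
  have hgnP : ∀ u, u ∉ P → g u = 0 := fun u hu => by
    simp only [hP, Finset.mem_filter, Finset.mem_univ, true_and, not_lt] at hu
    exact max_eq_right hu
  set q : Fin n → ℝ := fun u => (g u) ^ 2 with hq
  have hq0 : ∀ u, 0 ≤ q u := fun u => sq_nonneg _
  have hsuppq : (Finset.univ.filter fun u => q u ≠ 0) = P := by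
    ext u
    simp only [Finset.mem_filter, Finset.mem_univ, true_and, hP, hq]
    constructor
    · intro hu
      rcases lt_or_ge 0 (h u) with h1 | h1
      · exact h1
      · exact absurd (by rw [hgnP u (by simp [hP, not_lt.2 h1])]; norm_num) hu
    · intro hu
      rw [hgP u (by simp [hP, hu])]
      positivity
  set G := ∑ u, q u with hG
  have hGpos : 0 < G := by
    obtain ⟨u, hu⟩ := hpos
    have h1 : 0 < q u := by
      have hgu := hgP u hu
      have hhu : 0 < h u := by simp only [hP, Finset.mem_filter] at hu; exact hu.2
      simp only [hq]
      rw [hgu]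
      positivity
    exact h1.trans_le (Finset.single_le_sum (fun j _ => hq0 j) (Finset.mem_univ u))
  -- coarea bound
  have hco : 2 * θ * G ≤ ∑ u, ∑ v, A u v * |q u - q v| :=
    coarea A hsym hnonneg θ hθle (Finset.univ.filter fun u => q u ≠ 0).card q hq0 rfl
      (by rw [hsuppq]; exact hsize)
  -- s = g L g
  set s := g ⬝ᵥ (Matrix.diagonal d - A).mulVec g with hs
  have hsform : s = (∑ u, ∑ v, A u v * (g u - g v) ^ 2) / 2 := quadform_s19 A hsym d hd g
  have hs0 : 0 ≤ s := by
    rw [hsform]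
    apply div_nonneg _ two_pos.le
    exact Finset.sum_nonneg fun u _ => Finset.sum_nonneg fun v _ =>
      mul_nonneg (hnonneg u v) (sq_nonneg _)
  -- s ≤ lam * G
  have hslam : s ≤ lam * G := by
    have hterm : ∀ u ∈ P, g u * ((Matrix.diagonal d - A).mulVec g) u ≤ lam * (h u)^2 := by
      intro u hu
      have hLg : ((Matrix.diagonal d - A).mulVec g) u = d u * g u - ∑ v, A u v * g v := by
        rw [Matrix.sub_mulVec]
        simp only [Pi.sub_apply, Matrix.mulVec_diagonal]
        rfl
      have hLh : d u * h u - ∑ v, A u v * h v = lam * h u := by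
        have := congrFun hEig u
        rw [Matrix.sub_mulVec] at this
        simp only [Pi.sub_apply, Matrix.mulVec_diagonal, Pi.smul_apply, smul_eq_mul] at this
        exact this
      have hsum_le : ∑ v, A u v * h v ≤ ∑ v, A u v * g v :=
        Finset.sum_le_sum fun v _ => mul_le_mul_of_nonneg_left (hgh v) (hnonneg u v)
      have hgu : g u = h u := hgP u hu
      have hhu : 0 < h u := by simp only [hP, Finset.mem_filter] at hu; exact hu.2
      calc g u * ((Matrix.diagonal d - A).mulVec g) u
          = h u * (d u * h u - ∑ v, A u v * g v) := by rw [hLg, hgu]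
        _ ≤ h u * (d u * h u - ∑ v, A u v * h v) := by
            apply mul_le_mul_of_nonneg_left _ hhu.le
            linarith
        _ = lam * (h u)^2 := by rw [hLh]; ring
    have hrestrict : s = ∑ u ∈ P, g u * ((Matrix.diagonal d - A).mulVec g) u := by
      rw [hs]
      simp only [dotProduct]
      symm
      apply Finset.sum_subset (Finset.subset_univ P)
      intro u _ hu
      rw [hgnP u hu, zero_mul]
    have hGP : G = ∑ u ∈ P, (h u)^2 := by
      rw [hG]
      symm
      calc ∑ u ∈ P, (h u)^2 = ∑ u ∈ P, q u :=
            Finset.sum_congr rfl fun u hu => by simp only [hq]; rw [hgP u hu]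
        _ = ∑ u, q u := by
            apply Finset.sum_subset (Finset.subset_univ P)
            intro u _ hu
            simp only [hq]
            rw [hgnP u hu]
            norm_num
    rw [hrestrict, hGP, Finset.mul_sum]
    exact Finset.sum_le_sum hterm
  -- Cauchy-Schwarz
  have hCS : (∑ u, ∑ v, A u v * |q u - q v|) ^ 2
      ≤ (∑ u, ∑ v, A u v * (g u - g v)^2) * (∑ u, ∑ v, A u v * (g u + g v)^2) := by
    have key := Finset.sum_mul_sq_le_sq_mul_sq Finset.univ
      (fun p : Fin n × Fin n => Real.sqrt (A p.1 p.2) * |g p.1 - g p.2|)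
      (fun p : Fin n × Fin n => Real.sqrt (A p.1 p.2) * (g p.1 + g p.2))
    have e1 : ∀ p : Fin n × Fin n,
        (Real.sqrt (A p.1 p.2) * |g p.1 - g p.2|) * (Real.sqrt (A p.1 p.2) * (g p.1 + g p.2))
        = A p.1 p.2 * |q p.1 - q p.2| := by
      intro p
      have habs : |q p.1 - q p.2| = |g p.1 - g p.2| * (g p.1 + g p.2) := by
        rw [hq]
        have : (g p.1)^2 - (g p.2)^2 = (g p.1 - g p.2) * (g p.1 + g p.2) := by ring
        rw [this, abs_mul, abs_of_nonneg (by positivity : (0:ℝ) ≤ g p.1 + g p.2)]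
      calc (Real.sqrt (A p.1 p.2) * |g p.1 - g p.2|) * (Real.sqrt (A p.1 p.2) * (g p.1 + g p.2))
          = (Real.sqrt (A p.1 p.2) * Real.sqrt (A p.1 p.2)) * (|g p.1 - g p.2| * (g p.1 + g p.2)) := by
            ring
        _ = A p.1 p.2 * |q p.1 - q p.2| := by
            rw [Real.mul_self_sqrt (hnonneg p.1 p.2), habs]
    have e2 : ∀ p : Fin n × Fin n,
        (Real.sqrt (A p.1 p.2) * |g p.1 - g p.2|)^2 = A p.1 p.2 * (g p.1 - g p.2)^2 := by
      intro p
      rw [mul_pow, Real.sq_sqrt (hnonneg p.1 p.2), sq_abs]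
    have e3 : ∀ p : Fin n × Fin n,
        (Real.sqrt (A p.1 p.2) * (g p.1 + g p.2))^2 = A p.1 p.2 * (g p.1 + g p.2)^2 := by
      intro p
      rw [mul_pow, Real.sq_sqrt (hnonneg p.1 p.2)]
    rw [Finset.sum_congr rfl fun p _ => e1 p, Finset.sum_congr rfl fun p _ => e2 p,
      Finset.sum_congr rfl fun p _ => e3 p] at key
    have c1 : (∑ p : Fin n × Fin n, A p.1 p.2 * |q p.1 - q p.2|)
        = ∑ u, ∑ v, A u v * |q u - q v| :=
      Fintype.sum_prod_type (f := fun p : Fin n × Fin n => A p.1 p.2 * |q p.1 - q p.2|)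
    have c2 : (∑ p : Fin n × Fin n, A p.1 p.2 * (g p.1 - g p.2)^2)
        = ∑ u, ∑ v, A u v * (g u - g v)^2 :=
      Fintype.sum_prod_type (f := fun p : Fin n × Fin n => A p.1 p.2 * (g p.1 - g p.2)^2)
    have c3 : (∑ p : Fin n × Fin n, A p.1 p.2 * (g p.1 + g p.2)^2)
        = ∑ u, ∑ v, A u v * (g u + g v)^2 :=
      Fintype.sum_prod_type (f := fun p : Fin n × Fin n => A p.1 p.2 * (g p.1 + g p.2)^2)
    rw [c1, c2, c3] at key
    exact key
  -- E1 = 2s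
  have hE1 : (∑ u, ∑ v, A u v * (g u - g v)^2) = 2 * s := by
    rw [hsform]; ring
  -- E2 bound
  have hswap : ∑ u, ∑ v, A u v * (g v)^2 = ∑ u, ∑ v, A u v * (g u)^2 := by
    rw [Finset.sum_comm]
    exact Finset.sum_congr rfl fun u _ => Finset.sum_congr rfl fun v _ => by rw [hsym.apply]
  have hE2 : (∑ u, ∑ v, A u v * (g u + g v)^2) = 4 * (∑ u, d u * (g u)^2) - 2 * s := by
    have expand : ∀ u : Fin n, ∑ v, A u v * (g u + g v)^2
        = 2 * (∑ v, A u v * (g u)^2) + 2 * (∑ v, A u v * (g v)^2)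
          - ∑ v, A u v * (g u - g v)^2 := by
      intro u
      rw [Finset.mul_sum, Finset.mul_sum, ← Finset.sum_add_distrib, ← Finset.sum_sub_distrib]
      exact Finset.sum_congr rfl fun v _ => by ring
    rw [Finset.sum_congr rfl fun u _ => expand u]
    rw [Finset.sum_sub_distrib, Finset.sum_add_distrib, ← Finset.mul_sum, ← Finset.mul_sum,
      hswap, hE1]
    have hdg : ∀ u : Fin n, (∑ v, A u v * (g u)^2) = d u * (g u)^2 := fun u => by
      rw [← Finset.sum_mul, ← hd]
    rw [Finset.sum_congr rfl fun u _ => hdg u]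
    ring
  have hdV : (∑ u, d u * (g u)^2) ≤ V * G := by
    rw [hG, Finset.mul_sum]
    exact Finset.sum_le_sum fun u _ => by
      rw [hq]
      exact mul_le_mul_of_nonneg_right (hV u) (sq_nonneg _)
  -- combine
  have hfinal : (2 * θ * G)^2 ≤ (2*s) * (4*(V*G) - 2*s) := by
    have h1 : (2 * θ * G)^2 ≤ (∑ u, ∑ v, A u v * |q u - q v|)^2 := by
      have hlhs : 0 ≤ 2 * θ * G := by positivity
      exact pow_le_pow_left₀ hlhs hco 2
    have h2 : (∑ u, ∑ v, A u v * (g u + g v)^2) ≤ 4*(V*G) - 2*s := by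
      rw [hE2]; linarith
    have h3 : (0:ℝ) ≤ ∑ u, ∑ v, A u v * (g u + g v)^2 :=
      Finset.sum_nonneg fun u _ => Finset.sum_nonneg fun v _ =>
        mul_nonneg (hnonneg u v) (sq_nonneg _)
    calc (2 * θ * G)^2 ≤ (∑ u, ∑ v, A u v * |q u - q v|)^2 := h1
      _ ≤ (∑ u, ∑ v, A u v * (g u - g v)^2) * (∑ u, ∑ v, A u v * (g u + g v)^2) := hCS
      _ = (2*s) * (∑ u, ∑ v, A u v * (g u + g v)^2) := by rw [hE1]
      _ ≤ (2*s) * (4*(V*G) - 2*s) := by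
          apply mul_le_mul_of_nonneg_left h2 (by linarith)
  -- now derive θ^2 ≤ lam * (2V - lam)
  nlinarith [hfinal, hslam, hs0, hGpos, mul_pos hGpos hGpos,
    mul_nonneg (sub_nonneg.2 hslam) (sub_nonneg.2 (by nlinarith : s + lam * G ≤ 2 * V * G))]

end MoharAux

/-- For any connected weighted graph `G` with maximum volume `vol_max` and edge
expansion `θ(G)`, the second smallest Laplacian eigenvalue satisfies
`λ₂(G) ≥ vol_max − √(vol_max² − θ(G)²)`. -/
theorem stmt19 {n : ℕ} (A : Matrix (Fin n) (Fin n) ℝ)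
    (hsym : A.IsSymm) (hnonneg : ∀ u v, 0 ≤ A u v)
    (hconn : (SimpleGraph.fromRel fun u v => A u v ≠ 0).Connected)
    (d : Fin n → ℝ) (hd : ∀ u, d u = ∑ v, A u v)
    (L : Matrix (Fin n) (Fin n) ℝ) (hL : L = Matrix.diagonal d - A)
    (volmax : ℝ) (hmax : (∀ u, d u ≤ volmax) ∧ ∃ u, d u = volmax) :
    fiedler L ≥ volmax - Real.sqrt (volmax ^ 2 - edgeExpansion A ^ 2) := by
  subst hL
  obtain ⟨hVub, u₀, hVeq⟩ := hmax
  obtain ⟨v0⟩ := hconn.nonempty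
  have hn1 : 0 < n := v0.pos
  have hdnn : ∀ u, 0 ≤ d u := fun u => by
    rw [hd]
    exact Finset.sum_nonneg fun v _ => hnonneg u v
  have hV0 : 0 ≤ volmax := hVeq ▸ hdnn u₀
  by_cases hn2 : 2 ≤ n
  · -- main case
    have hθ0 : 0 ≤ edgeExpansion A := by
      apply Real.sInf_nonneg
      rintro r ⟨S, hS1, hS2, rfl⟩
      exact div_nonneg (Finset.sum_nonneg fun i _ => Finset.sum_nonneg fun j _ => hnonneg i j)
        (Nat.cast_nonneg _)
    have hbdd : BddBelow {r : ℝ | ∃ S : Finset (Fin n), S.Nonempty ∧ 2 * S.card ≤ n ∧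
        r = (∑ i ∈ S, ∑ j ∈ Sᶜ, A i j) / S.card} := by
      refine ⟨0, ?_⟩
      rintro r ⟨S, hS1, hS2, rfl⟩
      exact div_nonneg (Finset.sum_nonneg fun i _ => Finset.sum_nonneg fun j _ => hnonneg i j)
        (Nat.cast_nonneg _)
    have hθle : ∀ S : Finset (Fin n), S.Nonempty → 2 * S.card ≤ n →
        edgeExpansion A * S.card ≤ ∑ i ∈ S, ∑ j ∈ Sᶜ, A i j := by
      intro S hS1 hS2
      have hmem : (∑ i ∈ S, ∑ j ∈ Sᶜ, A i j) / S.card ∈ {r : ℝ | ∃ S : Finset (Fin n),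
          S.Nonempty ∧ 2 * S.card ≤ n ∧ r = (∑ i ∈ S, ∑ j ∈ Sᶜ, A i j) / S.card} :=
        ⟨S, hS1, hS2, rfl⟩
      have h := csInf_le hbdd hmem
      have hcardpos : (0:ℝ) < S.card := by exact_mod_cast Finset.card_pos.2 hS1
      rw [le_div_iff₀ hcardpos] at h
      exact h
    have hLs : ∀ i j, (Matrix.diagonal d - A) i j = (Matrix.diagonal d - A) j i := by
      intro i j
      by_cases hij : i = j
      · subst hij; rfl
      · simp [Matrix.sub_apply, Matrix.diagonal_apply, hij,
          (show ¬ j = i from fun hh => hij hh.symm), hsym.apply i j]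
    have hrow : ∀ i, ∑ j, (Matrix.diagonal d - A) i j = 0 := by
      intro i
      simp only [Matrix.sub_apply, Matrix.diagonal_apply, Finset.sum_sub_distrib,
        Finset.sum_ite_eq, Finset.mem_univ, if_true]
      rw [← hd]
      ring
    obtain ⟨x, hx1, hx2, hfe, hmin⟩ := fiedler_min hn2 (Matrix.diagonal d - A)
    set lam := x ⬝ᵥ (Matrix.diagonal d - A).mulVec x with hlam
    have heig : (Matrix.diagonal d - A).mulVec x = lam • x :=
      eigenvec (by omega) _ hLs hrow x hx1 hx2 hmin
    have hlam0 : 0 ≤ lam := by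
      rw [hlam, quadform_s19 A hsym d hd x]
      exact div_nonneg (Finset.sum_nonneg fun u _ => Finset.sum_nonneg fun v _ =>
        mul_nonneg (hnonneg u v) (sq_nonneg _)) two_pos.le
    by_cases hcase : volmax ≤ lam
    · have hsq := Real.sqrt_nonneg (volmax^2 - edgeExpansion A^2)
      rw [ge_iff_le, hfe]
      linarith
    · push_neg at hcase
      have hxne : x ≠ 0 := by
        intro h0
        rw [h0] at hx2
        simp at hx2
      have hposne : (Finset.univ.filter fun u => 0 < x u).Nonempty := by
        by_contra hcon
        apply hxne
        funext u
        have hall : ∀ w ∈ Finset.univ, x w ≤ 0 := by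
          intro w _
          by_contra hgt
          push_neg at hgt
          exact hcon ⟨w, by simp [hgt]⟩
        exact (Finset.sum_eq_zero_iff_of_nonpos hall).1 hx1 u (Finset.mem_univ u)
      have hnegne : (Finset.univ.filter fun u => x u < 0).Nonempty := by
        by_contra hcon
        apply hxne
        funext u
        have hall : ∀ w ∈ Finset.univ, 0 ≤ x w := by
          intro w _
          by_contra hgt
          push_neg at hgt
          exact hcon ⟨w, by simp [hgt]⟩
        exact (Finset.sum_eq_zero_iff_of_nonneg hall).1 hx1 u (Finset.mem_univ u)
      have hdisj : Disjoint (Finset.univ.filter fun u => 0 < x u)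
          (Finset.univ.filter fun u => x u < 0) := by
        rw [Finset.disjoint_left]
        intro u h1 h2
        simp only [Finset.mem_filter] at h1 h2
        linarith [h1.2, h2.2]
      have hcards : (Finset.univ.filter fun u => 0 < x u).card
          + (Finset.univ.filter fun u => x u < 0).card ≤ n := by
        rw [← Finset.card_union_of_disjoint hdisj]
        calc _ ≤ Finset.univ.card := Finset.card_le_card (Finset.subset_univ _)
          _ = n := by simp
      have hmohar : edgeExpansion A ^ 2 ≤ lam * (2 * volmax - lam) := by
        rcases le_or_gt (2 * (Finset.univ.filter fun u => 0 < x u).card) n with hhalf | hhalf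
        · exact mohar A hsym hnonneg d hd (edgeExpansion A) volmax hθ0 hθle hVub lam hlam0
            hcase.le x heig hposne hhalf
        · have heig' : (Matrix.diagonal d - A).mulVec (-x) = lam • (-x) := by
            rw [Matrix.mulVec_neg, heig, smul_neg]
          have hfilter : (Finset.univ.filter fun u => 0 < (-x) u)
              = (Finset.univ.filter fun u => x u < 0) := by
            ext u
            simp [neg_pos]
          have hsize' : 2 * (Finset.univ.filter fun u => 0 < (-x) u).card ≤ n := by
            rw [hfilter]
            omega
          exact mohar A hsym hnonneg d hd (edgeExpansion A) volmax hθ0 hθle hVub lam hlam0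
            hcase.le (-x) heig' (by rw [hfilter]; exact hnegne) hsize'
      have h1 : (volmax - lam)^2 ≤ volmax^2 - edgeExpansion A^2 := by nlinarith
      have h2 : volmax - lam ≤ Real.sqrt (volmax^2 - edgeExpansion A^2) :=
        Real.le_sqrt_of_sq_le h1
      rw [ge_iff_le, hfe]
      linarith
  · -- n = 1
    have hne : n = 1 := by omega
    subst hne
    have hθ : edgeExpansion A = 0 := by
      have hset : {r : ℝ | ∃ S : Finset (Fin 1), S.Nonempty ∧ 2 * S.card ≤ 1 ∧
          r = (∑ i ∈ S, ∑ j ∈ Sᶜ, A i j) / S.card} = ∅ := by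
        ext r
        simp only [Set.mem_setOf_eq, Set.mem_empty_iff_false, iff_false]
        rintro ⟨S, hS1, hS2, _⟩
        have := Finset.card_pos.2 hS1
        omega
      rw [edgeExpansion, hset, Real.sInf_empty]
    have hfied : fiedler (Matrix.diagonal d - A) = 0 := by
      have hset : {r : ℝ | ∃ x : Fin 1 → ℝ, x ≠ 0 ∧ (∑ i, x i) = 0 ∧
          r = (x ⬝ᵥ (Matrix.diagonal d - A).mulVec x) / (∑ i, (x i) ^ 2)} = ∅ := by
        ext r
        simp only [Set.mem_setOf_eq, Set.mem_empty_iff_false, iff_false]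
        rintro ⟨x, hx0, hxsum, _⟩
        apply hx0
        funext i
        have hi : i = 0 := Subsingleton.elim _ _
        rw [Fin.sum_univ_one] at hxsum
        rw [hi]
        exact hxsum
      rw [fiedler, hset, Real.sInf_empty]
    rw [hfied, hθ]
    have : Real.sqrt (volmax^2 - 0^2) = volmax := by
      rw [← Real.sqrt_sq hV0]
      norm_num
    rw [this]
    simp
end
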